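/- arXiv:1802.10453 — 10 statements merged into one kernel-verified Lean document; each statement's English description precedes it below -/
import Mathlib

section
/- For any matrix A over a field F of size m×n, there exists a unique m×n matrix R with entries in {0,1} having exactly rank(A) ones, with at most one 1 in each row and each column (rook placement), such that for all i ≤ m and j ≤ n, the rank of the leading i×j submatrix of R equals the rank of the leading i×j submatrix of A. -/
open Matrix
open scoped Classical

open Submodule

namespace RPM
variable {F : Type*} [Field F]

noncomputable def tr (F : Type*) [Field F] (a b : ℕ) : (Fin a → F) →ₗ[F] (Fin b → F) where
  toFun v := fun k => if h : (k : ℕ) < a then v ⟨k, h⟩ else 0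
  map_add' x y := by funext k; by_cases h : (k : ℕ) < a <;> simp [h]
  map_smul' c x := by funext k; by_cases h : (k : ℕ) < a <;> simp [h]

lemma tr_apply (a b : ℕ) (v : Fin a → F) (k : Fin b) :
    tr F a b v k = if h : (k : ℕ) < a then v ⟨k, h⟩ else 0 := rfl

lemma tr_comp (a b c : ℕ) (hbc : b ≤ c) :
    tr F a b = (tr F c b).comp (tr F a c) := by
  ext v k
  simp only [LinearMap.comp_apply, tr_apply]
  rcases lt_or_ge (k : ℕ) a with h | h
  · rw [dif_pos h, dif_pos (lt_of_lt_of_le k.2 hbc), dif_pos h]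
  · rw [dif_neg (not_lt.2 h), dif_pos (lt_of_lt_of_le k.2 hbc), dif_neg (not_lt.2 h)]

lemma tr_surj (a b : ℕ) (hba : b ≤ a) : Function.Surjective (tr F a b) := by
  intro w
  refine ⟨fun p => if h : (p : ℕ) < b then w ⟨p, h⟩ else 0, ?_⟩
  funext k
  rw [tr_apply, dif_pos (lt_of_lt_of_le k.2 hba)]
  simp [k.2]

lemma finrank_ker_tr (i : ℕ) : Module.finrank F (LinearMap.ker (tr F (i+1) i)) = 1 := by
  have h := LinearMap.finrank_range_add_finrank_ker (tr F (i+1) i)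
  rw [LinearMap.range_eq_top.2 (tr_surj (i+1) i (Nat.le_succ i)), finrank_top] at h
  simp [Module.finrank_fin_fun] at h
  omega

variable {m n : ℕ} (A : Matrix (Fin m) (Fin n) F)

/-- Column `j` of `A` as a vector. -/
def col' (j : Fin n) : Fin m → F := fun p => A p j

/-- Set of first `j` columns truncated to first `i` rows. -/
def colset (i j : ℕ) : Set (Fin i → F) :=
  (fun j' : Fin n => tr F m i (col' A j')) '' {j' : Fin n | (j' : ℕ) < j}

noncomputable def V (i j : ℕ) : Submodule F (Fin i → F) := span F (colset A i j)

noncomputable def fr (i j : ℕ) : ℕ := Module.finrank F (V A i j)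

/-- Column `j` truncated to `i` rows is dependent on previous columns. -/
def Dp (i : ℕ) (j : Fin n) : Prop := tr F m i (col' A j) ∈ V A i (j : ℕ)

lemma V_map {i i' : ℕ} (h : i ≤ i') (j : ℕ) :
    (V A i' j).map (tr F i' i) = V A i j := by
  rw [V, V, Submodule.map_span]
  congr 1
  rw [colset, colset, ← Set.image_comp]
  apply Set.image_congr
  intro j' _
  rw [Function.comp_apply, tr_comp m i i' h, LinearMap.comp_apply]

lemma Dp_mono {i i' : ℕ} (h : i ≤ i') {j : Fin n} (hD : Dp A i' j) : Dp A i j := by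
  rw [Dp, tr_comp m i i' h, LinearMap.comp_apply, ← V_map A h]
  exact Submodule.mem_map_of_mem hD

lemma Dp_zero (j : Fin n) : Dp A 0 j := by
  have : tr F m 0 (col' A j) = 0 := Subsingleton.elim _ _
  rw [Dp, this]; exact zero_mem _

lemma colset_succ_of_lt (i : ℕ) {j : ℕ} (hj : j < n) :
    colset A i (j+1) = insert (tr F m i (col' A ⟨j, hj⟩)) (colset A i j) := by
  rw [colset, colset]
  have : {j' : Fin n | (j' : ℕ) < j + 1} = insert (⟨j, hj⟩ : Fin n) {j' : Fin n | (j' : ℕ) < j} := by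
    ext j'
    simp only [Set.mem_insert_iff, Set.mem_setOf_eq, Nat.lt_succ_iff_lt_or_eq, Fin.ext_iff]
    tauto
  rw [this, Set.image_insert_eq]

lemma colset_succ_of_ge (i : ℕ) {j : ℕ} (hj : n ≤ j) :
    colset A i (j+1) = colset A i j := by
  have hset : {j' : Fin n | (j' : ℕ) < j + 1} = {j' : Fin n | (j' : ℕ) < j} := by
    ext j'
    simp only [Set.mem_setOf_eq]
    exact ⟨fun _ => lt_of_lt_of_le j'.2 hj, fun h => h.trans (Nat.lt_succ_self j)⟩
  rw [colset, colset, hset]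

lemma fr_zero (i : ℕ) : fr A i 0 = 0 := by
  have : colset A i 0 = ∅ := by ext x; simp [colset]
  rw [fr, V, this, span_empty, finrank_bot]

lemma fr_succ_of_lt (i : ℕ) {j : ℕ} (hj : j < n) :
    fr A i (j+1) = fr A i j + (if Dp A i ⟨j, hj⟩ then 0 else 1) := by
  rw [fr, fr, V, V, colset_succ_of_lt A i hj]
  by_cases hD : Dp A i ⟨j, hj⟩
  · rw [if_pos hD, Submodule.span_insert_eq_span hD, add_zero]
  · rw [if_neg hD, Submodule.span_insert]
    have hx : tr F m i (col' A ⟨j, hj⟩) ∉ V A i j := hD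
    have hx0 : tr F m i (col' A ⟨j, hj⟩) ≠ 0 := by
      intro h0; exact hx (h0 ▸ zero_mem _)
    have hdis : Disjoint (V A i j) (F ∙ tr F m i (col' A ⟨j, hj⟩)) :=
      (Submodule.disjoint_span_singleton' hx0).2 hx
    have := Submodule.finrank_sup_add_finrank_inf_eq (V A i j)
      (F ∙ tr F m i (col' A ⟨j, hj⟩))
    rw [hdis.eq_bot, finrank_bot, add_zero, finrank_span_singleton hx0] at this
    rw [sup_comm] at this
    exact this

lemma fr_count (i j : ℕ) :
    fr A i j = (Finset.univ.filter (fun j' : Fin n => (j' : ℕ) < j ∧ ¬ Dp A i j')).card := by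
  induction j with
  | zero => simp [fr_zero]
  | succ j ih =>
    rcases lt_or_ge j n with hj | hj
    · rw [fr_succ_of_lt A i hj, ih]
      have hsplit : (Finset.univ.filter (fun j' : Fin n => (j' : ℕ) < j + 1 ∧ ¬ Dp A i j'))
          = (Finset.univ.filter (fun j' : Fin n => (j' : ℕ) < j ∧ ¬ Dp A i j')) ∪
            (Finset.univ.filter (fun j' : Fin n => j' = ⟨j, hj⟩ ∧ ¬ Dp A i j')) := by
        ext j'
        simp only [Finset.mem_filter, Finset.mem_union, Finset.mem_univ, true_and,
          Nat.lt_succ_iff_lt_or_eq, Fin.ext_iff]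
        tauto
      have hdisj : Disjoint (Finset.univ.filter (fun j' : Fin n => (j' : ℕ) < j ∧ ¬ Dp A i j'))
          (Finset.univ.filter (fun j' : Fin n => j' = ⟨j, hj⟩ ∧ ¬ Dp A i j')) := by
        rw [Finset.disjoint_filter]
        rintro j' - ⟨hlt, -⟩ ⟨rfl, -⟩
        exact lt_irrefl _ hlt
      rw [hsplit, Finset.card_union_of_disjoint hdisj]
      congr 1
      by_cases hD : Dp A i ⟨j, hj⟩
      · rw [if_pos hD]
        symm
        rw [Finset.card_eq_zero]
        ext j'; simp only [Finset.mem_filter, Finset.notMem_empty, iff_false, not_and]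
        rintro - rfl h
        exact (h hD).elim
      · rw [if_neg hD]
        symm
        rw [Finset.card_eq_one]
        refine ⟨⟨j, hj⟩, ?_⟩
        ext j'
        simp only [Finset.mem_filter, Finset.mem_singleton, Finset.mem_univ, true_and]
        constructor
        · rintro ⟨rfl, -⟩; rfl
        · rintro rfl; exact ⟨rfl, hD⟩
    · rw [fr, V, colset_succ_of_ge A i hj, ← V, ← fr, ih]
      congr 1
      apply Finset.filter_congr
      intro j' _
      have h1 : (j' : ℕ) < j := lt_of_lt_of_le j'.2 hj
      simp [h1, h1.trans (Nat.lt_succ_self j)]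

end RPM

namespace RPM
variable {F : Type*} [Field F] {m n : ℕ} (A : Matrix (Fin m) (Fin n) F)

lemma fr_rank {i j : ℕ} (hi : i ≤ m) (hj : j ≤ n) :
    (A.submatrix (Fin.castLE hi) (Fin.castLE hj)).rank = fr A i j := by
  have hset : Set.range (A.submatrix (Fin.castLE hi) (Fin.castLE hj))ᵀ = colset A i j := by
    ext x
    refine Set.mem_range.trans ?_
    constructor
    · rintro ⟨j', rfl⟩
      refine ⟨Fin.castLE hj j', j'.2, ?_⟩
      funext k
      simp only [Matrix.transpose_apply, Matrix.submatrix_apply, tr_apply]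
      rw [dif_pos (lt_of_lt_of_le k.2 hi)]
      rfl
    · rintro ⟨j'', hj'', rfl⟩
      refine ⟨⟨(j'' : ℕ), hj''⟩, ?_⟩
      funext k
      simp only [Matrix.transpose_apply, Matrix.submatrix_apply, tr_apply]
      rw [dif_pos (lt_of_lt_of_le k.2 hi)]
      rfl
  rw [Matrix.rank_eq_finrank_span_cols, show (A.submatrix (Fin.castLE hi) (Fin.castLE hj)).col = (A.submatrix (Fin.castLE hi) (Fin.castLE hj))ᵀ from rfl, hset]
  rfl

lemma fr_row_step (i j : ℕ) : fr A (i+1) j ≤ fr A i j + 1 := by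
  have hmap : (V A (i+1) j).map (tr F (i+1) i) = V A i j := V_map A (Nat.le_succ i) j
  set φ := tr F (i+1) i with hφ
  set W := V A (i+1) j with hW
  have h1 : Module.finrank F (LinearMap.range (φ.comp W.subtype)) +
      Module.finrank F (LinearMap.ker (φ.comp W.subtype)) = Module.finrank F W :=
    LinearMap.finrank_range_add_finrank_ker _
  have h2 : LinearMap.range (φ.comp W.subtype) = V A i j := by
    rw [LinearMap.range_comp, Submodule.range_subtype, hmap]
  have h3 : Module.finrank F (LinearMap.ker (φ.comp W.subtype)) ≤ 1 := by
    have hle : (LinearMap.ker (φ.comp W.subtype)).map W.subtype ≤ LinearMap.ker φ := by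
      rintro x ⟨y, hy, rfl⟩
      exact hy
    calc Module.finrank F (LinearMap.ker (φ.comp W.subtype))
        = Module.finrank F ((LinearMap.ker (φ.comp W.subtype)).map W.subtype) :=
          (Submodule.finrank_map_subtype_eq _ _).symm
      _ ≤ Module.finrank F (LinearMap.ker φ) := Submodule.finrank_mono hle
      _ = 1 := finrank_ker_tr i
  rw [fr, fr, ← h1, h2]
  omega

end RPM

namespace RPM
variable {F : Type*} [Field F]

lemma single_one_injective {a : ℕ} :
    Function.Injective (fun i : Fin a => Pi.single i (1 : F)) := by
  intro i i' h
  by_contra hne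
  have h2 := congrFun h i
  simp only [Pi.single_apply, if_pos rfl, if_neg hne] at h2
  exact one_ne_zero h2

lemma rook_rank {a b : ℕ} (B : Matrix (Fin a) (Fin b) F)
    (h01 : ∀ i j, B i j = 0 ∨ B i j = 1)
    (hrow : ∀ i j j', B i j = 1 → B i j' = 1 → j = j')
    (hcol : ∀ i i' j, B i j = 1 → B i' j = 1 → i = i') :
    B.rank = (Finset.univ.filter (fun p : Fin a × Fin b => B p.1 p.2 = 1)).card := by
  classical
  set P : Finset (Fin a) := Finset.univ.filter (fun i => ∃ j, B i j = 1) with hP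
  set E : Finset (Fin a → F) := P.image (fun i => Pi.single i (1 : F)) with hE
  have hcolmem : ∀ (i : Fin a) (j : Fin b), B i j = 1 →
      Bᵀ j = Pi.single i (1 : F) := by
    intro i j hij
    funext i'
    rw [Matrix.transpose_apply, Pi.single_apply]
    by_cases h : i' = i
    · subst h
      rw [if_pos rfl]
      exact hij
    · rw [if_neg h]
      rcases h01 i' j with h0 | h1
      · exact h0
      · exact absurd (hcol i' i j h1 hij) h
  have hsub1 : Set.range Bᵀ ⊆ insert 0 (E : Set (Fin a → F)) := by
    rintro x ⟨j, rfl⟩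
    by_cases hc : ∃ i, B i j = 1
    · obtain ⟨i, hi⟩ := hc
      right
      rw [hE]
      simp only [Finset.coe_image, Set.mem_image, Finset.mem_coe]
      exact ⟨i, by simp [hP]; exact ⟨j, hi⟩, (hcolmem i j hi).symm⟩
    · left
      funext i'
      rcases h01 i' j with h0 | h1
      · exact h0
      · exact absurd ⟨i', h1⟩ hc
  have hsub2 : (E : Set (Fin a → F)) ⊆ Set.range Bᵀ := by
    rintro x hx
    rw [hE] at hx
    simp only [Finset.coe_image, Set.mem_image, Finset.mem_coe, hP,
      Finset.mem_filter, Finset.mem_univ, true_and] at hx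
    obtain ⟨i, ⟨j, hj⟩, rfl⟩ := hx
    exact ⟨j, hcolmem i j hj⟩
  have hspan : Submodule.span F (Set.range Bᵀ) = Submodule.span F (E : Set (Fin a → F)) := by
    apply le_antisymm
    · rw [← Submodule.span_insert_zero (s := (E : Set (Fin a → F)))]
      exact Submodule.span_mono hsub1
    · exact Submodule.span_mono hsub2
  have hli : LinearIndependent F ((↑) : ↥(E : Set (Fin a → F)) → (Fin a → F)) := by
    apply LinearIndepOn.mono (v := id) (t := (E : Set (Fin a → F)))
      (s := Set.range (fun i : Fin a => Pi.single i (1 : F)))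
    swap
    · rw [hE]
      rintro x hx
      simp only [Finset.coe_image, Set.mem_image, Finset.mem_coe] at hx
      obtain ⟨i, -, rfl⟩ := hx
      exact ⟨i, rfl⟩
    · have hb := (Pi.basisFun F (Fin a)).linearIndependent
      have : ⇑(Pi.basisFun F (Fin a)) = fun i : Fin a => Pi.single i (1 : F) := by
        funext i; exact Pi.basisFun_apply (R := F) (η := Fin a) i
      rw [this] at hb
      exact hb.linearIndepOn_id
  rw [Matrix.rank_eq_finrank_span_cols, show B.col = Bᵀ from rfl, hspan, finrank_span_finset_eq_card hli, hE,
    Finset.card_image_of_injective _ single_one_injective]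
  symm
  apply Finset.card_bij (fun p _ => p.1)
  · intro p hp
    rw [Finset.mem_filter] at hp ⊢
    exact ⟨Finset.mem_univ _, ⟨p.2, hp.2⟩⟩
  · intro p hp q hq h
    rw [Finset.mem_filter] at hp hq
    have h2 : p.2 = q.2 := hrow p.1 p.2 q.2 hp.2 (h ▸ hq.2)
    exact Prod.ext h h2
  · intro i hi
    rw [Finset.mem_filter] at hi
    obtain ⟨-, j, hj⟩ := hi
    exact ⟨(i, j), Finset.mem_filter.2 ⟨Finset.mem_univ _, hj⟩, rfl⟩

end RPM

namespace RPM
variable {F : Type*} [Field F] {m n : ℕ} (A : Matrix (Fin m) (Fin n) F)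

lemma piv_unique {i i' : ℕ} {j : Fin n} (h1 : Dp A i j ∧ ¬ Dp A (i+1) j)
    (h2 : Dp A i' j ∧ ¬ Dp A (i'+1) j) : i = i' := by
  by_contra hne
  rcases Nat.lt_or_ge i i' with h | h
  · exact h1.2 (Dp_mono A h h2.1)
  · exact h2.2 (Dp_mono A (lt_of_le_of_ne h (Ne.symm hne)) h1.1)

lemma not_Dp_iff_piv {i : ℕ} {j : Fin n} :
    ¬ Dp A i j ↔ ∃ i' < i, Dp A i' j ∧ ¬ Dp A (i'+1) j := by
  constructor
  · intro h
    induction i with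
    | zero => exact absurd (Dp_zero A j) h
    | succ i ih =>
      by_cases hD : Dp A i j
      · exact ⟨i, Nat.lt_succ_self i, hD, h⟩
      · obtain ⟨i', hi', h'⟩ := ih hD
        exact ⟨i', hi'.trans (Nat.lt_succ_self i), h'⟩
  · rintro ⟨i', hi', hD, hnD⟩ hcon
    exact hnD (Dp_mono A hi' hcon)

/-- Count of ones in the leading `i × j` block. -/
noncomputable def N (X : Matrix (Fin m) (Fin n) F) (i j : ℕ) : ℕ :=
  (Finset.univ.filter
    (fun p : Fin m × Fin n => X p.1 p.2 = 1 ∧ (p.1 : ℕ) < i ∧ (p.2 : ℕ) < j)).card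

lemma count_sub (X : Matrix (Fin m) (Fin n) F) {i j : ℕ} (hi : i ≤ m) (hj : j ≤ n) :
    (Finset.univ.filter
      (fun p : Fin i × Fin j =>
        (X.submatrix (Fin.castLE hi) (Fin.castLE hj)) p.1 p.2 = 1)).card
      = N X i j := by
  simp only [Matrix.submatrix_apply]
  apply Finset.card_bij (fun p _ => (Fin.castLE hi p.1, Fin.castLE hj p.2))
  · intro p hp
    refine Finset.mem_filter.2 ?_; replace hp := Finset.mem_filter.1 hp
    exact ⟨Finset.mem_univ _, hp.2, p.1.2, p.2.2⟩
  · intro p hp q hq h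
    rw [Prod.ext_iff] at h
    exact Prod.ext (Fin.castLE_injective hi h.1) (Fin.castLE_injective hj h.2)
  · intro p hp
    rw [Finset.mem_filter] at hp
    obtain ⟨-, h1, h2, h3⟩ := hp
    refine ⟨(⟨(p.1 : ℕ), h2⟩, ⟨(p.2 : ℕ), h3⟩), ?_, ?_⟩
    · refine Finset.mem_filter.2 ?_
      refine ⟨Finset.mem_univ _, ?_⟩
      have e1 : Fin.castLE hi ⟨(p.1 : ℕ), h2⟩ = p.1 := Fin.ext rfl
      have e2 : Fin.castLE hj ⟨(p.2 : ℕ), h3⟩ = p.2 := Fin.ext rfl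
      rw [e1, e2]
      exact h1
    · exact Prod.ext (Fin.ext rfl) (Fin.ext rfl)

/-- Number of ones in row `i` among the first `j` columns. -/
noncomputable def rowN (X : Matrix (Fin m) (Fin n) F) (i : Fin m) (j : ℕ) : ℕ :=
  (Finset.univ.filter (fun q : Fin n => X i q = 1 ∧ (q : ℕ) < j)).card

lemma N_succ_row (X : Matrix (Fin m) (Fin n) F) {i : ℕ} (hi : i < m) (j : ℕ) :
    N X (i+1) j = N X i j + rowN X ⟨i, hi⟩ j := by
  rw [N, N, rowN]
  have hsplit : (Finset.univ.filter
      (fun p : Fin m × Fin n => X p.1 p.2 = 1 ∧ (p.1 : ℕ) < i + 1 ∧ (p.2 : ℕ) < j))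
      = (Finset.univ.filter
          (fun p : Fin m × Fin n => X p.1 p.2 = 1 ∧ (p.1 : ℕ) < i ∧ (p.2 : ℕ) < j)) ∪
        (Finset.univ.filter
          (fun p : Fin m × Fin n => X p.1 p.2 = 1 ∧ p.1 = ⟨i, hi⟩ ∧ (p.2 : ℕ) < j)) := by
    ext p
    simp only [Finset.mem_filter, Finset.mem_union, Finset.mem_univ, true_and,
      Nat.lt_succ_iff_lt_or_eq, Fin.ext_iff]
    tauto
  have hdisj : Disjoint (Finset.univ.filter
      (fun p : Fin m × Fin n => X p.1 p.2 = 1 ∧ (p.1 : ℕ) < i ∧ (p.2 : ℕ) < j))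
      (Finset.univ.filter
        (fun p : Fin m × Fin n => X p.1 p.2 = 1 ∧ p.1 = ⟨i, hi⟩ ∧ (p.2 : ℕ) < j)) := by
    rw [Finset.disjoint_filter]
    rintro p - ⟨-, hlt, -⟩ ⟨-, he, -⟩
    rw [he] at hlt
    exact lt_irrefl _ hlt
  rw [hsplit, Finset.card_union_of_disjoint hdisj]
  congr 1
  apply Finset.card_bij (fun p _ => p.2)
  · intro p hp
    rw [Finset.mem_filter] at hp ⊢
    obtain ⟨-, h1, he, h3⟩ := hp
    rw [he] at h1
    exact ⟨Finset.mem_univ _, h1, h3⟩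
  · intro p hp q hq h
    rw [Finset.mem_filter] at hp hq
    exact Prod.ext (hp.2.2.1.trans hq.2.2.1.symm) h
  · intro q hq
    rw [Finset.mem_filter] at hq
    exact ⟨(⟨i, hi⟩, q), Finset.mem_filter.2 ⟨Finset.mem_univ _, hq.2.1, rfl, hq.2.2⟩, rfl⟩

lemma rowN_succ (X : Matrix (Fin m) (Fin n) F) (i : Fin m) {j : ℕ} (hj : j < n) :
    rowN X i (j+1) = rowN X i j + (if X i ⟨j, hj⟩ = 1 then 1 else 0) := by
  rw [rowN, rowN]
  have hsplit : (Finset.univ.filter (fun q : Fin n => X i q = 1 ∧ (q : ℕ) < j + 1))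
      = (Finset.univ.filter (fun q : Fin n => X i q = 1 ∧ (q : ℕ) < j)) ∪
        (Finset.univ.filter (fun q : Fin n => X i q = 1 ∧ q = ⟨j, hj⟩)) := by
    ext q
    simp only [Finset.mem_filter, Finset.mem_union, Finset.mem_univ, true_and,
      Nat.lt_succ_iff_lt_or_eq, Fin.ext_iff]
    tauto
  have hdisj : Disjoint (Finset.univ.filter (fun q : Fin n => X i q = 1 ∧ (q : ℕ) < j))
      (Finset.univ.filter (fun q : Fin n => X i q = 1 ∧ q = ⟨j, hj⟩)) := by
    rw [Finset.disjoint_filter]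
    rintro q - ⟨-, hlt⟩ ⟨-, rfl⟩
    exact lt_irrefl _ hlt
  rw [hsplit, Finset.card_union_of_disjoint hdisj]
  congr 1
  by_cases hX : X i ⟨j, hj⟩ = 1
  · rw [if_pos hX]
    refine Finset.card_eq_one.2 ⟨⟨j, hj⟩, ?_⟩
    ext q
    simp only [Finset.mem_filter, Finset.mem_singleton, Finset.mem_univ, true_and]
    constructor
    · rintro ⟨-, rfl⟩; rfl
    · rintro rfl; exact ⟨hX, rfl⟩
  · rw [if_neg hX]
    refine Finset.card_eq_zero.2 ?_
    ext q
    simp only [Finset.mem_filter, Finset.notMem_empty, iff_false, not_and]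
    rintro - h he
    rw [he] at h
    exact (hX h).elim

lemma eq_of_N_eq {X Y : Matrix (Fin m) (Fin n) F}
    (h01X : ∀ i j, X i j = 0 ∨ X i j = 1) (h01Y : ∀ i j, Y i j = 0 ∨ Y i j = 1)
    (hN : ∀ i j, i ≤ m → j ≤ n → N X i j = N Y i j) : X = Y := by
  have hrow : ∀ (i : Fin m) (j : ℕ), j ≤ n → rowN X i j = rowN Y i j := by
    intro i j hj
    have h1 := N_succ_row X i.2 j
    have h2 := N_succ_row Y i.2 j
    have h3 := hN ((i : ℕ) + 1) j i.2 hj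
    have h4 := hN (i : ℕ) j (le_of_lt i.2) hj
    have e : (⟨(i : ℕ), i.2⟩ : Fin m) = i := Fin.ext rfl
    rw [e] at h1 h2
    omega
  ext i j
  have h1 := rowN_succ X i j.2
  have h2 := rowN_succ Y i j.2
  have h3 := hrow i (j : ℕ) (le_of_lt j.2)
  have h4 := hrow i ((j : ℕ) + 1) j.2
  have e : (⟨(j : ℕ), j.2⟩ : Fin n) = j := Fin.ext rfl
  rw [e] at h1 h2
  by_cases hX : X i j = 1 <;> by_cases hY : Y i j = 1
  · rw [hX, hY]
  · rw [if_pos hX, if_neg hY] at *; omega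
  · rw [if_neg hX, if_pos hY] at *; omega
  · rcases h01X i j with h | h
    · rcases h01Y i j with h' | h'
      · rw [h, h']
      · exact absurd h' hY
    · exact absurd h hX

end RPM

namespace RPM
variable {F : Type*} [Field F] {m n : ℕ} (A : Matrix (Fin m) (Fin n) F)

/-- The rank profile matrix of `A`. -/
noncomputable def Rm : Matrix (Fin m) (Fin n) F :=
  Matrix.of fun i j => if Dp A (i : ℕ) j ∧ ¬ Dp A ((i : ℕ) + 1) j then 1 else 0

lemma Rm_01 (i : Fin m) (j : Fin n) : Rm A i j = 0 ∨ Rm A i j = 1 := by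
  by_cases h : Dp A (i : ℕ) j ∧ ¬ Dp A ((i : ℕ) + 1) j
  · right; simp only [Rm, Matrix.of_apply, if_pos h]
  · left; simp only [Rm, Matrix.of_apply, if_neg h]

lemma Rm_eq_one_iff (i : Fin m) (j : Fin n) :
    Rm A i j = 1 ↔ (Dp A (i : ℕ) j ∧ ¬ Dp A ((i : ℕ) + 1) j) := by
  simp only [Rm, Matrix.of_apply]
  constructor
  · intro h1
    by_contra h
    rw [if_neg h] at h1
    exact zero_ne_one h1
  · intro h
    rw [if_pos h]

lemma Rm_row (i : Fin m) (j j' : Fin n) (h : Rm A i j = 1) (h' : Rm A i j' = 1) :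
    j = j' := by
  rw [Rm_eq_one_iff] at h h'
  by_contra hne
  set Si := Finset.univ.filter (fun q : Fin n => ¬ Dp A (i : ℕ) q) with hSi
  set Si1 := Finset.univ.filter (fun q : Fin n => ¬ Dp A ((i : ℕ) + 1) q) with hSi1
  have hfr1 : fr A (i : ℕ) n = Si.card := by
    rw [fr_count, hSi]
    congr 1
    apply Finset.filter_congr
    intro q _
    simp [q.2]
  have hfr2 : fr A ((i : ℕ) + 1) n = Si1.card := by
    rw [fr_count, hSi1]
    congr 1
    apply Finset.filter_congr
    intro q _
    simp [q.2]
  have hstep := fr_row_step A (i : ℕ) n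
  have hsub : insert j (insert j' Si) ⊆ Si1 := by
    intro q hq
    rw [hSi1, Finset.mem_filter]
    refine ⟨Finset.mem_univ _, ?_⟩
    rcases Finset.mem_insert.1 hq with rfl | hq'
    · exact h.2
    · rcases Finset.mem_insert.1 hq' with rfl | hq''
      · exact h'.2
      · rw [hSi, Finset.mem_filter] at hq''
        exact fun hc => hq''.2 (Dp_mono A (Nat.le_succ _) hc)
  have hjS : j ∉ insert j' Si := by
    intro hc
    rcases Finset.mem_insert.1 hc with he | hc'
    · exact hne he
    · exact (Finset.mem_filter.1 hc').2 h.1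
  have hj'S : j' ∉ Si := fun hc => (Finset.mem_filter.1 hc).2 h'.1
  have hcard := Finset.card_le_card hsub
  rw [Finset.card_insert_of_notMem hjS, Finset.card_insert_of_notMem hj'S] at hcard
  omega

lemma Rm_col (i i' : Fin m) (j : Fin n) (h : Rm A i j = 1) (h' : Rm A i' j = 1) :
    i = i' :=
  Fin.ext (piv_unique A ((Rm_eq_one_iff A i j).1 h) ((Rm_eq_one_iff A i' j).1 h'))

lemma Rm_N {i j : ℕ} (hi : i ≤ m) (hj : j ≤ n) : N (Rm A) i j = fr A i j := by
  rw [fr_count]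
  apply Finset.card_bij (fun p _ => p.2)
  · intro p hp
    rw [Finset.mem_filter] at hp ⊢
    obtain ⟨-, h1, h2, h3⟩ := hp
    rw [Rm_eq_one_iff] at h1
    exact ⟨Finset.mem_univ _, h3, (not_Dp_iff_piv A).2 ⟨(p.1 : ℕ), h2, h1⟩⟩
  · intro p hp q hq he
    rw [Finset.mem_filter] at hp hq
    have h1 := (Rm_eq_one_iff A p.1 p.2).1 hp.2.1
    have h2 := (Rm_eq_one_iff A q.1 q.2).1 hq.2.1
    rw [← he] at h2
    exact Prod.ext (Fin.ext (piv_unique A h1 h2)) he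
  · intro q hq
    rw [Finset.mem_filter] at hq
    obtain ⟨-, hqj, hqD⟩ := hq
    obtain ⟨i', hi', hpiv⟩ := (not_Dp_iff_piv A).1 hqD
    refine ⟨(⟨i', lt_of_lt_of_le hi' hi⟩, q), ?_, rfl⟩
    rw [Finset.mem_filter]
    exact ⟨Finset.mem_univ _, (Rm_eq_one_iff A _ _).2 hpiv, hi', hqj⟩

end RPM


/-- Existence and uniqueness of the rank profile matrix. -/
theorem rank_profile_matrix_exists_unique
    (F : Type*) [Field F] (m n : ℕ) (A : Matrix (Fin m) (Fin n) F) :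
    ∃! R : Matrix (Fin m) (Fin n) F,
      (∀ i j, R i j = 0 ∨ R i j = 1) ∧
      (Finset.univ.filter (fun p : Fin m × Fin n => R p.1 p.2 = 1)).card = A.rank ∧
      (∀ i j j', R i j = 1 → R i j' = 1 → j = j') ∧
      (∀ i i' j, R i j = 1 → R i' j = 1 → i = i') ∧
      (∀ (i j : ℕ) (hi : i ≤ m) (hj : j ≤ n),
        (R.submatrix (Fin.castLE hi) (Fin.castLE hj)).rank =
        (A.submatrix (Fin.castLE hi) (Fin.castLE hj)).rank) := by
  classical
  have key : ∀ (X : Matrix (Fin m) (Fin n) F),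
      (∀ i j, X i j = 0 ∨ X i j = 1) →
      (∀ i j j', X i j = 1 → X i j' = 1 → j = j') →
      (∀ i i' j, X i j = 1 → X i' j = 1 → i = i') →
      ∀ (i j : ℕ) (hi : i ≤ m) (hj : j ≤ n),
        (X.submatrix (Fin.castLE hi) (Fin.castLE hj)).rank = RPM.N X i j := by
    intro X h01 hrow hcol i j hi hj
    rw [RPM.rook_rank (X.submatrix (Fin.castLE hi) (Fin.castLE hj))
        (fun p q => h01 _ _)
        (fun p q q' h h' => Fin.castLE_injective hj (hrow _ _ _ h h'))
        (fun p p' q h h' => Fin.castLE_injective hi (hcol _ _ _ h h')),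
      RPM.count_sub X hi hj]
  have hRmrk : ∀ (i j : ℕ) (hi : i ≤ m) (hj : j ≤ n),
      ((RPM.Rm A).submatrix (Fin.castLE hi) (Fin.castLE hj)).rank =
      (A.submatrix (Fin.castLE hi) (Fin.castLE hj)).rank := by
    intro i j hi hj
    rw [key (RPM.Rm A) (RPM.Rm_01 A) (RPM.Rm_row A) (RPM.Rm_col A) i j hi hj,
      RPM.Rm_N A hi hj, RPM.fr_rank A hi hj]
  refine ⟨RPM.Rm A, ⟨RPM.Rm_01 A, ?_, RPM.Rm_row A, RPM.Rm_col A, hRmrk⟩, ?_⟩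
  · -- total count equals rank of A
    have htot : (Finset.univ.filter
        (fun p : Fin m × Fin n => RPM.Rm A p.1 p.2 = 1)).card = RPM.N (RPM.Rm A) m n := by
      rw [RPM.N]
      congr 1
      apply Finset.filter_congr
      intro p _
      simp [p.1.2, p.2.2]
    have hid1 : Fin.castLE (le_refl m) = (id : Fin m → Fin m) := funext fun k => Fin.ext rfl
    have hid2 : Fin.castLE (le_refl n) = (id : Fin n → Fin n) := funext fun k => Fin.ext rfl
    have hA : A.rank = RPM.fr A m n := by
      have := RPM.fr_rank A (le_refl m) (le_refl n)
      rwa [hid1, hid2, Matrix.submatrix_id_id] at this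
    rw [htot, RPM.Rm_N A (le_refl m) (le_refl n), hA]
  · rintro Y ⟨h01Y, hcardY, hrowY, hcolY, hrkY⟩
    apply RPM.eq_of_N_eq h01Y (RPM.Rm_01 A)
    intro i j hi hj
    have e1 := key Y h01Y hrowY hcolY i j hi hj
    have e2 := key (RPM.Rm A) (RPM.Rm_01 A) (RPM.Rm_row A) (RPM.Rm_col A) i j hi hj
    have e3 := hrkY i j hi hj
    have e4 := hRmrk i j hi hj
    omega
end

section
/- If A is a symmetric n×n matrix over a field, then its rank profile matrix is symmetric. -/
open Matrix
open scoped Classical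

/-- `R` is the rank profile matrix of `A`. -/
def IsRankProfileMatrix {F : Type*} [Field F] {m n : ℕ}
    (A R : Matrix (Fin m) (Fin n) F) : Prop :=
  (∀ i j, R i j = 0 ∨ R i j = 1) ∧
  (Finset.univ.filter (fun p : Fin m × Fin n => R p.1 p.2 = 1)).card = A.rank ∧
  (∀ i j j', R i j = 1 → R i j' = 1 → j = j') ∧
  (∀ i i' j, R i j = 1 → R i' j = 1 → i = i') ∧
  (∀ (i j : ℕ) (hi : i ≤ m) (hj : j ≤ n),
    (R.submatrix (Fin.castLE hi) (Fin.castLE hj)).rank =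
    (A.submatrix (Fin.castLE hi) (Fin.castLE hj)).rank)

/-- The rank of a partial permutation matrix is its number of ones. -/
lemma rank_of_partial_perm {F : Type*} [Field F] {a b : ℕ} (M : Matrix (Fin a) (Fin b) F)
    (h01 : ∀ i j, M i j = 0 ∨ M i j = 1)
    (hrow : ∀ i j j', M i j = 1 → M i j' = 1 → j = j')
    (hcol : ∀ i i' j, M i j = 1 → M i' j = 1 → i = i') :
    M.rank = (Finset.univ.filter (fun p : Fin a × Fin b => M p.1 p.2 = 1)).card := by
  classical
  set T : Finset (Fin b) := Finset.univ.filter (fun j => ∃ i, M i j = 1) with hT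
  have hmemT : ∀ j : Fin b, j ∈ T ↔ ∃ i, M i j = 1 := by
    intro j; simp [hT]
  -- choose the row index for each column in T
  have hσ : ∀ j : ↥T, ∃ i, M i (j : Fin b) = 1 := fun j => (hmemT j).1 j.2
  choose σ hσ1 using hσ
  have hσinj : Function.Injective σ := by
    intro j j' h
    have h1 := hσ1 j
    have h2 := hσ1 j'
    rw [h] at h1
    have := hrow (σ j') _ _ h1 h2
    exact Subtype.ext this
  -- each column in T is a standard basis vector
  have hcolval : ∀ j : ↥T, Mᵀ (j : Fin b) = Pi.single (σ j) (1 : F) := by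
    intro j
    funext i
    by_cases hi : i = σ j
    · subst hi; simp [Matrix.transpose_apply, hσ1 j]
    · rcases h01 i (j : Fin b) with h | h
      · simp [Matrix.transpose_apply, h, Pi.single_apply, hi]
      · exact absurd (hcol _ _ _ h (hσ1 j)) hi
  -- columns not in T are zero
  have hzero : ∀ j : Fin b, j ∉ T → Mᵀ j = 0 := by
    intro j hj
    funext i
    rcases h01 i j with h | h
    · simpa using h
    · exact absurd ((hmemT j).2 ⟨i, h⟩) hj
  -- span of all columns = span of columns in T
  have hspan : Submodule.span F (Set.range Mᵀ) =
      Submodule.span F (Set.range fun j : ↥T => Mᵀ (j : Fin b)) := by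
    apply le_antisymm
    · rw [Submodule.span_le]
      rintro x ⟨j, rfl⟩
      by_cases hj : j ∈ T
      · exact Submodule.subset_span ⟨⟨j, hj⟩, rfl⟩
      · rw [hzero j hj]; exact Submodule.zero_mem _
    · apply Submodule.span_mono
      rintro x ⟨j, rfl⟩
      exact ⟨(j : Fin b), rfl⟩
  have hli : LinearIndependent F (fun j : ↥T => Mᵀ (j : Fin b)) := by
    have : (fun j : ↥T => Mᵀ (j : Fin b)) = (fun i => Pi.single i (1 : F)) ∘ σ := by
      funext j; simp [hcolval j]
    have h2 : (fun i => Pi.single i (1 : F)) = ⇑(Pi.basisFun F (Fin a)) := by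
      funext i; simp
    rw [this, h2]
    exact (Pi.basisFun F (Fin a)).linearIndependent.comp σ hσinj
  have hrank : M.rank = T.card := by
    rw [Matrix.rank_eq_finrank_span_cols]
    change Module.finrank F (Submodule.span F (Set.range Mᵀ)) = _
    rw [hspan, finrank_span_eq_card hli,
      Fintype.card_coe]
  rw [hrank]
  -- bijection between T and the set of ones
  apply (Finset.card_bij (fun (p : Fin a × Fin b) _ => p.2) ?_ ?_ ?_).symm
  · intro p hp
    simp only [Finset.mem_filter, Finset.mem_univ, true_and] at hp
    exact (hmemT p.2).2 ⟨p.1, hp⟩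
  · intro p hp q hq h
    simp only [Finset.mem_filter, Finset.mem_univ, true_and] at hp hq
    rw [← h] at hq
    exact Prod.ext (hcol _ _ _ hp hq) h
  · intro j hj
    obtain ⟨i, hi⟩ := (hmemT j).1 hj
    exact ⟨(i, j), by simpa using hi, rfl⟩

/-- A symmetric matrix has a symmetric rank profile matrix. -/
theorem symmetric_rank_profile_matrix {F : Type*} [Field F] {n : ℕ}
    (A R : Matrix (Fin n) (Fin n) F) (hA : A.IsSymm)
    (hR : IsRankProfileMatrix A R) : R.IsSymm := by
  classical
  obtain ⟨h01, -, hrow, hcol, hlead⟩ := hR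
  -- the counting function
  set c : ℕ → ℕ → ℕ := fun i j =>
    (Finset.univ.filter (fun p : Fin n × Fin n =>
      (p.1 : ℕ) < i ∧ (p.2 : ℕ) < j ∧ R p.1 p.2 = 1)).card with hc
  -- c i j equals the rank of the leading i × j submatrix of A
  have key : ∀ (i j : ℕ) (hi : i ≤ n) (hj : j ≤ n),
      c i j = (A.submatrix (Fin.castLE hi) (Fin.castLE hj)).rank := by
    intro i j hi hj
    rw [← hlead i j hi hj]
    rw [rank_of_partial_perm (R.submatrix (Fin.castLE hi) (Fin.castLE hj))
      (fun p q => h01 _ _)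
      (fun p q q' h1 h2 =>
        Fin.castLE_injective hj (hrow _ _ _ h1 h2))
      (fun p p' q h1 h2 =>
        Fin.castLE_injective hi (hcol _ _ _ h1 h2))]
    rw [hc]
    apply Finset.card_bij (fun (p : Fin n × Fin n) hp =>
      ((⟨(p.1 : ℕ), by
          simp only [Finset.mem_filter] at hp; exact hp.2.1⟩ : Fin i),
       (⟨(p.2 : ℕ), by
          simp only [Finset.mem_filter] at hp; exact hp.2.2.1⟩ : Fin j))) ?_ ?_ ?_
    · intro p hp
      simp only [Finset.mem_filter, Finset.mem_univ, true_and] at hp ⊢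
      simp only [Matrix.submatrix_apply]
      convert hp.2.2 using 2 <;> exact Fin.ext rfl
    · intro p hp q hq h
      simp only [Prod.mk.injEq, Fin.mk.injEq] at h
      exact Prod.ext (Fin.ext h.1) (Fin.ext h.2)
    · intro q hq
      simp only [Finset.mem_filter, Finset.mem_univ, true_and,
        Matrix.submatrix_apply] at hq
      refine ⟨(Fin.castLE hi q.1, Fin.castLE hj q.2), ?_, ?_⟩
      · simp only [Finset.mem_filter, Finset.mem_univ, true_and]
        exact ⟨q.1.isLt, q.2.isLt, (Finset.mem_filter.mp hq).2⟩
      · exact Prod.ext (Fin.ext rfl) (Fin.ext rfl)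
  -- c is symmetric since A is
  have csymm : ∀ (i j : ℕ), i ≤ n → j ≤ n → c i j = c j i := by
    intro i j hi hj
    rw [key i j hi hj, key j i hj hi]
    have : A.submatrix (Fin.castLE hj) (Fin.castLE hi) =
        (A.submatrix (Fin.castLE hi) (Fin.castLE hj))ᵀ := by
      rw [Matrix.transpose_submatrix, hA.eq]
    rw [this, Matrix.rank_transpose]
  -- inclusion-exclusion identity
  have hie : ∀ i j : Fin n,
      c ((i : ℕ) + 1) ((j : ℕ) + 1) + c i j =
      c i ((j : ℕ) + 1) + c ((i : ℕ) + 1) j + (if R i j = 1 then 1 else 0) := by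
    intro i j
    have hdelta : (if R i j = 1 then 1 else 0) =
        ∑ p : Fin n × Fin n,
          if p.1 = i ∧ p.2 = j ∧ R p.1 p.2 = 1 then 1 else 0 := by
      rw [Finset.sum_eq_single (i, j)]
      · simp
      · intro p _ hp
        rw [if_neg]
        rintro ⟨h1, h2, -⟩
        exact hp (Prod.ext h1 h2)
      · simp
    simp only [hc, Finset.card_filter, hdelta, ← Finset.sum_add_distrib]
    apply Finset.sum_congr rfl
    intro p _
    by_cases hp : R p.1 p.2 = 1
    · simp only [hp, and_true, Fin.ext_iff]
      split_ifs <;> omega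
    · simp [hp]
  -- conclude
  rw [Matrix.IsSymm]
  ext i j
  rw [Matrix.transpose_apply]
  have h1 := hie i j
  have h2 := hie j i
  have e1 : c ((i : ℕ) + 1) ((j : ℕ) + 1) = c ((j : ℕ) + 1) ((i : ℕ) + 1) :=
    csymm _ _ i.isLt j.isLt
  have e2 : c i j = c j i := csymm _ _ (le_of_lt i.isLt) (le_of_lt j.isLt)
  have e3 : c i ((j : ℕ) + 1) = c ((j : ℕ) + 1) i :=
    csymm _ _ (le_of_lt i.isLt) j.isLt
  have e4 : c ((i : ℕ) + 1) j = c j ((i : ℕ) + 1) :=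
    csymm _ _ i.isLt (le_of_lt j.isLt)
  have hiff : (if R i j = 1 then 1 else 0) = (if R j i = 1 then 1 else 0) := by
    omega
  rcases h01 i j with h | h <;> rcases h01 j i with h' | h' <;>
    simp [h, h'] at hiff ⊢
end

section
/- Over the field F₂ with two elements, there do not exist a 2×2 permutation matrix P, a unit lower triangular matrix L, a diagonal matrix D̄, and a {0,1} support matrix Ψ ∈ {I₂, J} (where J is the antidiagonal identity) with PΨP^T = J, such that A = P L (Ψ D̄) L^T P^T, where A = [[0,1],[1,1]]. -/
open Matrix

/-- In characteristic 2, there is no symmetric indefinite elimination revealing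
the rank profile matrix of `A = !![0,1;1,1]`. -/
theorem no_rpm_revealing_ldlt_char_two :
    ¬ ∃ (σ : Equiv.Perm (Fin 2)) (x y z : ZMod 2)
        (Ψ : Matrix (Fin 2) (Fin 2) (ZMod 2)),
      (Ψ = 1 ∨ Ψ = !![0,1;1,0]) ∧
      (σ.toPEquiv.toMatrix : Matrix (Fin 2) (Fin 2) (ZMod 2)) * Ψ *
        (σ.toPEquiv.toMatrix : Matrix (Fin 2) (Fin 2) (ZMod 2))ᵀ = !![0,1;1,0] ∧
      (!![0,1;1,1] : Matrix (Fin 2) (Fin 2) (ZMod 2)) =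
        (σ.toPEquiv.toMatrix : Matrix (Fin 2) (Fin 2) (ZMod 2)) *
          !![1,0;x,1] * (Ψ * !![y,0;0,z]) * (!![1,0;x,1])ᵀ *
          (σ.toPEquiv.toMatrix : Matrix (Fin 2) (Fin 2) (ZMod 2))ᵀ := by
  decide
end

section
/- Let F be a field of characteristic different from 2, let U be an invertible (full-rank) upper triangular n×n matrix over F, and let C be a symmetric n×n matrix over F. Then there exists an upper triangular matrix X over F such that X^T U + U^T X = C. -/
open Matrix

/-- TRSSYR2K existence: in characteristic ≠ 2, for invertible upper triangular `U`
and symmetric `C`, there exists upper triangular `X` with `Xᵀ U + Uᵀ X = C`. -/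
theorem trssyr2k_exists (F : Type*) [Field F] (hchar : ringChar F ≠ 2) (n : ℕ)
    (U C : Matrix (Fin n) (Fin n) F)
    (hUlow : ∀ i j : Fin n, j < i → U i j = 0) (hUdiag : ∀ i, U i i ≠ 0)
    (hC : C.IsSymm) :
    ∃ X : Matrix (Fin n) (Fin n) F,
      (∀ i j : Fin n, j < i → X i j = 0) ∧ Xᵀ * U + Uᵀ * X = C := by
  have h2 : (2 : F) ≠ 0 := Ring.two_ne_zero hchar
  have hU : U.BlockTriangular id := fun i j h => hUlow i j h
  have hdet : IsUnit U.det := by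
    rw [det_of_upperTriangular hU]
    exact (Finset.prod_ne_zero_iff.2 fun i _ => hUdiag i).isUnit
  have hUinv : U⁻¹ * U = 1 := nonsing_inv_mul U hdet
  set S : Matrix (Fin n) (Fin n) F := U⁻¹ᵀ * C * U⁻¹ with hS
  have hSsymm : ∀ i j, S j i = S i j := by
    intro i j
    have : Sᵀ = S := by
      rw [hS, transpose_mul, transpose_mul, transpose_transpose, hC.eq, mul_assoc]
    exact congrFun (congrFun this i) j
  set W : Matrix (Fin n) (Fin n) F :=
    Matrix.of (fun i j => if i < j then S i j else if i = j then S i i / 2 else 0) with hW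
  have hWtri : W.BlockTriangular id := by
    intro i j h
    simp only [hW, of_apply]
    rw [if_neg (by exact fun hij => absurd (lt_trans h hij) (lt_irrefl _)),
      if_neg (by rintro rfl; exact lt_irrefl _ h)]
  have hWS : Wᵀ + W = S := by
    ext i j
    simp only [Matrix.add_apply, transpose_apply, hW, of_apply]
    rcases lt_trichotomy i j with h | h | h
    · rw [if_neg (not_lt_of_gt h), if_neg (fun hji => absurd hji.symm (ne_of_lt h)), if_pos h]
      ring
    · subst h
      rw [if_neg (lt_irrefl i), if_pos rfl]
      field_simp
      ring
    · rw [if_pos h, if_neg (not_lt_of_gt h), if_neg (fun hij => absurd hij (ne_of_gt h))]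
      rw [hSsymm i j]; ring
  refine ⟨W * U, fun i j h => (hWtri.mul hU) h, ?_⟩
  have key : (W * U)ᵀ * U + Uᵀ * (W * U) = Uᵀ * (Wᵀ + W) * U := by
    rw [transpose_mul]
    noncomm_ring
  rw [key, hWS, hS]
  have hUTinv : Uᵀ * U⁻¹ᵀ = 1 := by
    rw [← transpose_mul, hUinv, transpose_one]
  calc Uᵀ * (U⁻¹ᵀ * C * U⁻¹) * U
      = (Uᵀ * U⁻¹ᵀ) * C * (U⁻¹ * U) := by noncomm_ring
    _ = C := by rw [hUTinv, hUinv, one_mul, mul_one]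
end

section
/- Let F be a field of characteristic different from 2 and U an invertible upper triangular n×n matrix over F. If X and Y are both upper triangular n×n matrices satisfying X^T U + U^T X = Y^T U + U^T Y, then X = Y. -/
open Matrix

/-- TRSSYR2K uniqueness in characteristic ≠ 2. -/
theorem trssyr2k_unique (F : Type*) [Field F] (hchar : ringChar F ≠ 2) (n : ℕ)
    (U X Y : Matrix (Fin n) (Fin n) F)
    (hUlow : ∀ i j : Fin n, j < i → U i j = 0) (hUdiag : ∀ i, U i i ≠ 0)
    (hX : ∀ i j : Fin n, j < i → X i j = 0)
    (hY : ∀ i j : Fin n, j < i → Y i j = 0)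
    (h : Xᵀ * U + Uᵀ * X = Yᵀ * U + Uᵀ * Y) :
    X = Y := by
  have h2 : (2 : F) ≠ 0 := Ring.two_ne_zero hchar
  set Z : Matrix (Fin n) (Fin n) F := X - Y with hZdef
  have hZlow : ∀ i j : Fin n, j < i → Z i j = 0 := by
    intro i j hij
    simp [hZdef, Matrix.sub_apply, hX i j hij, hY i j hij]
  have hZ0 : Zᵀ * U + Uᵀ * Z = 0 := by
    rw [hZdef, Matrix.transpose_sub, Matrix.sub_mul, Matrix.mul_sub]
    rw [sub_add_sub_comm, h, sub_self]
  have key : ∀ m : ℕ, ∀ i : Fin n, (i : ℕ) = m → ∀ j, Z i j = 0 := by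
    intro m
    induction m using Nat.strong_induction_on with
    | _ m IH =>
      intro i him
      -- rows strictly below i (index < i) are zero
      have hrow : ∀ k : Fin n, (k : ℕ) < (i : ℕ) → ∀ j, Z k j = 0 := by
        intro k hk j
        exact IH k (him ▸ hk) k rfl j
      -- the reduced equation: Z i i * U i j + U i i * Z i j = 0
      have hred : ∀ j : Fin n, Z i i * U i j + U i i * Z i j = 0 := by
        intro j
        have hentry := congrFun (congrFun hZ0 i) j
        simp only [Matrix.add_apply, Matrix.mul_apply, Matrix.transpose_apply,
          Matrix.zero_apply] at hentry
        have h1 : ∑ k, Z k i * U k j = Z i i * U i j := by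
          apply Finset.sum_eq_single_of_mem i (Finset.mem_univ i)
          intro k _ hk
          rcases lt_or_gt_of_ne (fun e => hk (Fin.ext e) : (k : ℕ) ≠ (i : ℕ)) with hlt | hgt
          · rw [hrow k hlt i, zero_mul]
          · rw [hZlow k i hgt, zero_mul]
        have h2' : ∑ k, U k i * Z k j = U i i * Z i j := by
          apply Finset.sum_eq_single_of_mem i (Finset.mem_univ i)
          intro k _ hk
          rcases lt_or_gt_of_ne (fun e => hk (Fin.ext e) : (k : ℕ) ≠ (i : ℕ)) with hlt | hgt
          · rw [hrow k hlt j, mul_zero]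
          · rw [hUlow k i hgt, zero_mul]
        rw [h1, h2'] at hentry
        exact hentry
      have hdiag : Z i i = 0 := by
        have := hred i
        have h2m : (2 : F) * (Z i i * U i i) = 0 := by ring_nf; ring_nf at this; linear_combination this
        rcases mul_eq_zero.mp h2m with hc | hc
        · exact absurd hc h2
        · exact (mul_eq_zero.mp hc).resolve_right (hUdiag i)
      intro j
      rcases lt_trichotomy (j : ℕ) (i : ℕ) with hlt | heq | hgt
      · exact hZlow i j hlt
      · rw [Fin.ext heq]; exact hdiag
      · have := hred j
        rw [hdiag, zero_mul, zero_add] at this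
        exact (mul_eq_zero.mp this).resolve_left (hUdiag i)
  have hZ : Z = 0 := by
    ext i j
    exact key i i rfl j
  have := sub_eq_zero.mp (hZdef ▸ hZ)
  exact this
end

section
/- Let B be an invertible m×m matrix over a field of characteristic ≠ 2 with factorization B = L D U (L unit lower triangular, D diagonal invertible, U unit upper triangular), and let C be a symmetric m×m matrix. Then there exists a matrix G such that the symmetric matrix N = [[0, B],[B^T, C]] factors as N = [[L, 0],[G, U^T]] · [[0, D],[D, 0]] · [[L^T, G^T],[0, U]]. -/
open Matrix

/-- Off-diagonal pivoting factorization in characteristic ≠ 2. -/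
theorem off_diagonal_pivoting (F : Type*) [Field F] (hchar : ringChar F ≠ 2)
    (m : ℕ) (B L D U C : Matrix (Fin m) (Fin m) F)
    (hB : Invertible B)
    (hLdiag : ∀ i, L i i = 1) (hLup : ∀ i j : Fin m, i < j → L i j = 0)
    (hDdiag : ∀ i j : Fin m, i ≠ j → D i j = 0) (hDnz : ∀ i, D i i ≠ 0)
    (hUdiag : ∀ i, U i i = 1) (hUlow : ∀ i j : Fin m, j < i → U i j = 0)
    (hLDU : B = L * D * U) (hC : C.IsSymm) :
    ∃ G : Matrix (Fin m) (Fin m) F,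
      Matrix.fromBlocks 0 B Bᵀ C =
        Matrix.fromBlocks L 0 G Uᵀ * Matrix.fromBlocks 0 D D 0 *
          Matrix.fromBlocks Lᵀ Gᵀ 0 U := by
  have h2 : (2 : F) ≠ 0 := Ring.two_ne_zero hchar
  have hhalf : (2⁻¹ : F) + 2⁻¹ = 1 := by
    rw [← two_mul]; exact mul_inv_cancel₀ h2
  have hUdet : IsUnit U.det := by
    rw [Matrix.det_of_upperTriangular hUlow]
    simp [hUdiag]
  have hDdet : IsUnit D.det := by
    rw [Matrix.det_of_upperTriangular (fun i j h => hDdiag i j (ne_of_gt h))]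
    exact isUnit_iff_ne_zero.mpr (Finset.prod_ne_zero_iff.mpr fun i _ => hDnz i)
  have hDsymm : Dᵀ = D := by
    ext i j
    by_cases h : i = j
    · subst h; simp [Matrix.transpose_apply]
    · simp [Matrix.transpose_apply, hDdiag i j h, hDdiag j i (Ne.symm h)]
  set G : Matrix (Fin m) (Fin m) F := (2⁻¹ : F) • (C * U⁻¹ * D⁻¹) with hG
  have key : G * D * U = (2⁻¹ : F) • C := by
    rw [hG, Matrix.smul_mul, Matrix.smul_mul,
      Matrix.nonsing_inv_mul_cancel_right _ _ hDdet,
      Matrix.nonsing_inv_mul_cancel_right _ _ hUdet]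
  have key2 : Uᵀ * D * Gᵀ = (2⁻¹ : F) • C := by
    have h : Uᵀ * D * Gᵀ = (G * D * U)ᵀ := by
      rw [Matrix.transpose_mul, Matrix.transpose_mul, hDsymm, Matrix.mul_assoc]
    rw [h, key, Matrix.transpose_smul, hC.eq]
  have hBT : Bᵀ = Uᵀ * D * Lᵀ := by
    rw [hLDU, Matrix.transpose_mul, Matrix.transpose_mul, hDsymm, Matrix.mul_assoc]
  refine ⟨G, ?_⟩
  rw [Matrix.fromBlocks_multiply, Matrix.fromBlocks_multiply]
  simp only [Matrix.mul_zero, Matrix.zero_mul, add_zero, zero_add, Matrix.mul_assoc]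
  rw [← Matrix.mul_assoc Uᵀ D Gᵀ, key2, ← Matrix.mul_assoc G D U, key, ← add_smul, hhalf, one_smul]
  rw [hLDU]
  simp [Matrix.mul_assoc, hDsymm]
end

section
/- Let F be a field of characteristic 2, B an invertible m×m matrix over F with B = L D U (L unit lower triangular, D diagonal invertible, U unit upper triangular), and C a symmetric m×m matrix. Then there exist a matrix G and a diagonal matrix Δ such that [[0, B],[B^T, C]] = [[L, 0],[G, U^T]] · [[0, D],[D, Δ]] · [[L^T, G^T],[0, U]]. -/
open Matrix

/-- The diagonal correction `Δ`, defined by the recurrence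
`Δ i = C i i - ∑_{k < i} Δ k * (U k i)^2`. -/
noncomputable def offDiagDelta {F : Type*} [Field F] {m : ℕ}
    (C U : Matrix (Fin m) (Fin m) F) : Fin m → F
  | i => C i i - ∑ k ∈ (Finset.Iio i).attach,
      offDiagDelta C U k.1 * (U k.1 i) ^ 2
termination_by i => i.1
decreasing_by
  have h := Finset.mem_Iio.mp k.2
  exact h

lemma offDiagDelta_eq {F : Type*} [Field F] {m : ℕ}
    (C U : Matrix (Fin m) (Fin m) F) (i : Fin m) :
    offDiagDelta C U i = C i i - ∑ k ∈ Finset.Iio i,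
      offDiagDelta C U k * (U k i) ^ 2 := by
  rw [offDiagDelta, ← Finset.sum_attach (Finset.Iio i)
    (fun k => offDiagDelta C U k * (U k i) ^ 2)]

/-- Off-diagonal pivoting factorization in characteristic 2, with an extra
diagonal `Δ` in the bottom-right block of the central matrix. -/
theorem off_diagonal_pivoting_char_two (F : Type*) [Field F] [CharP F 2]
    (m : ℕ) (B L D U C : Matrix (Fin m) (Fin m) F)
    (hB : Invertible B)
    (hLdiag : ∀ i, L i i = 1) (hLup : ∀ i j : Fin m, i < j → L i j = 0)
    (hDdiag : ∀ i j : Fin m, i ≠ j → D i j = 0) (hDnz : ∀ i, D i i ≠ 0)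
    (hUdiag : ∀ i, U i i = 1) (hUlow : ∀ i j : Fin m, j < i → U i j = 0)
    (hLDU : B = L * D * U) (hC : C.IsSymm) :
    ∃ (G Δ : Matrix (Fin m) (Fin m) F),
      (∀ i j : Fin m, i ≠ j → Δ i j = 0) ∧
      Matrix.fromBlocks 0 B Bᵀ C =
        Matrix.fromBlocks L 0 G Uᵀ * Matrix.fromBlocks 0 D D Δ *
          Matrix.fromBlocks Lᵀ Gᵀ 0 U := by
  classical
  -- basic facts about D and U
  set d : Fin m → F := fun i => D i i with hd
  have hD : D = Matrix.diagonal d := by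
    ext i j
    by_cases h : i = j
    · subst h; simp [Matrix.diagonal_apply_eq, hd]
    · simp [Matrix.diagonal_apply_ne _ h, hDdiag i j h]
  have hUtri : U.BlockTriangular id := fun i j h => hUlow i j h
  have hUdet : IsUnit U.det := by
    rw [Matrix.det_of_upperTriangular hUtri]
    simp [hUdiag]
  -- the diagonal correction
  set δ : Fin m → F := offDiagDelta C U with hδ
  set Δ : Matrix (Fin m) (Fin m) F := Matrix.diagonal δ with hΔ
  set M : Matrix (Fin m) (Fin m) F := C - Uᵀ * Δ * U with hM
  -- M is symmetric
  have hMsymm : Mᵀ = M := by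
    rw [hM, Matrix.transpose_sub, hC.eq, Matrix.transpose_mul,
      Matrix.transpose_mul, Matrix.transpose_transpose,
      Matrix.diagonal_transpose, Matrix.mul_assoc]
  -- M has zero diagonal
  have hMdiag : ∀ i, M i i = 0 := by
    intro i
    have hentry : (Uᵀ * Δ * U) i i = ∑ k, δ k * (U k i) ^ 2 := by
      rw [Matrix.mul_assoc, Matrix.mul_apply]
      refine Finset.sum_congr rfl fun k _ => ?_
      rw [hΔ, Matrix.diagonal_mul, Matrix.transpose_apply]
      ring
    have hsub : ∑ k, δ k * (U k i) ^ 2 = ∑ k ∈ Finset.Iic i, δ k * (U k i) ^ 2 := by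
      refine (Finset.sum_subset (Finset.subset_univ _) fun k _ hk => ?_).symm
      rw [Finset.mem_Iic, not_le] at hk
      rw [hUlow k i hk]; ring
    have hsplit : ∑ k ∈ Finset.Iic i, δ k * (U k i) ^ 2
        = δ i + ∑ k ∈ Finset.Iio i, δ k * (U k i) ^ 2 := by
      rw [← Finset.Iio_insert, Finset.sum_insert (by simp), hUdiag i]
      ring_nf
    have hrec : δ i = C i i - ∑ k ∈ Finset.Iio i, δ k * (U k i) ^ 2 :=
      offDiagDelta_eq C U i
    rw [hM, Matrix.sub_apply, hentry, hsub, hsplit, hrec]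
    ring
  -- the strictly-lower-triangular part of M
  set W : Matrix (Fin m) (Fin m) F := Matrix.of (fun i j => if j < i then M i j else 0)
    with hW
  have hWW : W + Wᵀ = M := by
    ext i j
    rcases lt_trichotomy i j with h | h | h
    · have h1 : ¬ j < i := not_lt.mpr h.le
      have : M j i = M i j := by
        calc M j i = Mᵀ i j := (Matrix.transpose_apply M i j).symm
          _ = M i j := by rw [hMsymm]
      simp [hW, Matrix.add_apply, Matrix.transpose_apply, h, h1, this]
    · subst h
      simp [hW, Matrix.add_apply, Matrix.transpose_apply, lt_irrefl, hMdiag i]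
    · have h1 : ¬ i < j := not_lt.mpr h.le
      simp [hW, Matrix.add_apply, Matrix.transpose_apply, h, h1]
  -- the matrix G
  set G : Matrix (Fin m) (Fin m) F := W * U⁻¹ * Matrix.diagonal (fun i => (d i)⁻¹)
    with hG
  have hGDU : G * D * U = W := by
    rw [hG, hD, Matrix.mul_assoc (W * U⁻¹), Matrix.diagonal_mul_diagonal]
    have : (fun i => (d i)⁻¹ * d i) = fun _ => (1 : F) := by
      funext i; exact inv_mul_cancel₀ (hDnz i)
    rw [this, Matrix.diagonal_one, Matrix.mul_one, Matrix.mul_assoc,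
      Matrix.nonsing_inv_mul U hUdet, Matrix.mul_one]
  have hDT : Dᵀ = D := by rw [hD, Matrix.diagonal_transpose]
  have hUDG : Uᵀ * D * Gᵀ = Wᵀ := by
    have h1 : (G * D * U)ᵀ = Uᵀ * D * Gᵀ := by
      rw [Matrix.transpose_mul (G * D) U, Matrix.transpose_mul G D, hDT,
        ← Matrix.mul_assoc]
    rw [← h1, hGDU]
  refine ⟨G, Δ, fun i j hij => Matrix.diagonal_apply_ne _ hij, ?_⟩
  rw [Matrix.fromBlocks_multiply, Matrix.fromBlocks_multiply]
  rw [Matrix.fromBlocks_inj]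
  refine ⟨by simp, by simp [hLDU, Matrix.mul_assoc], ?_, ?_⟩
  · simp only [Matrix.mul_zero, Matrix.zero_mul, Matrix.mul_zero, Matrix.zero_mul, add_zero, zero_add]
    rw [hLDU, Matrix.transpose_mul, Matrix.transpose_mul, hDT, Matrix.mul_assoc]
  · simp only [Matrix.mul_zero, Matrix.zero_mul, Matrix.mul_zero, Matrix.zero_mul, add_zero, zero_add]
    rw [Matrix.add_mul, hGDU, hUDG]
    have h2 : Wᵀ + (W + Uᵀ * Δ * U) = (W + Wᵀ) + Uᵀ * Δ * U := by abel
    rw [h2, hWW, hM]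
    abel
end

section
/- Let F be a field of characteristic 2 and U a unit upper triangular n×n matrix over F. If C is a symmetric n×n matrix with zero diagonal, then there exists an upper triangular matrix X over F such that X^T U + U^T X = C. -/
open Matrix

theorem quad_zero_aux {F : Type*} [Field F] [CharP F 2] {n : ℕ}
    (C : Matrix (Fin n) (Fin n) F) (hC : C.IsSymm) (hCdiag : ∀ i, C i i = 0)
    (v : Fin n → F) : ∑ j, ∑ k, v j * C j k * v k = 0 := by
  rw [← Finset.sum_product']
  refine Finset.sum_involution (fun p _ => (p.2, p.1)) ?_ ?_ (fun _ _ => Finset.mem_univ _)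
    (fun _ _ => rfl)
  · intro p _
    have hsym : C p.2 p.1 = C p.1 p.2 := hC.apply p.1 p.2
    simp only [hsym]
    have : v p.2 * C p.1 p.2 * v p.1 = v p.1 * C p.1 p.2 * v p.2 := by ring
    rw [this, CharTwo.add_self_eq_zero]
  · intro p _ hne heq
    apply hne
    have h12 : p.1 = p.2 := by
      have := congrArg Prod.fst heq
      simpa using this.symm
    rw [h12, hCdiag]
    ring

/-- TRSSYR2K existence in characteristic 2 when the symmetric right-hand side
has zero diagonal and `U` is unit upper triangular. -/
theorem trssyr2k_exists_char_two (F : Type*) [Field F] [CharP F 2] (n : ℕ)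
    (U C : Matrix (Fin n) (Fin n) F)
    (hUlow : ∀ i j : Fin n, j < i → U i j = 0) (hUdiag : ∀ i, U i i = 1)
    (hC : C.IsSymm) (hCdiag : ∀ i, C i i = 0) :
    ∃ X : Matrix (Fin n) (Fin n) F,
      (∀ i j : Fin n, j < i → X i j = 0) ∧ Xᵀ * U + Uᵀ * X = C := by
  have hBT : U.BlockTriangular id := fun i j h => hUlow i j h
  have hdet : U.det = 1 := by
    rw [Matrix.det_of_upperTriangular hBT]
    simp [hUdiag]
  have hU : IsUnit U.det := by rw [hdet]; exact isUnit_one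
  set V := U⁻¹ with hV
  have hVU : V * U = 1 := Matrix.nonsing_inv_mul U hU
  set C' := Vᵀ * C * V with hC'
  have hC'symm : ∀ i j, C' j i = C' i j := by
    intro i j
    have h : C'ᵀ = C' := by
      rw [hC', Matrix.transpose_mul, Matrix.transpose_mul, Matrix.transpose_transpose,
        hC.eq, Matrix.mul_assoc]
    exact Matrix.IsSymm.apply h i j
  have hC'diag : ∀ i, C' i i = 0 := by
    intro i
    have h : C' i i = ∑ k, ∑ j, V j i * C j k * V k i := by
      simp only [hC', Matrix.mul_apply, Matrix.transpose_apply, Finset.sum_mul]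
    rw [h, Finset.sum_comm]
    exact quad_zero_aux C hC hCdiag _
  set Z : Matrix (Fin n) (Fin n) F := Matrix.of (fun i j => if i < j then C' i j else 0)
    with hZ
  have hZBT : Z.BlockTriangular id := by
    intro i j h
    simp only [hZ, Matrix.of_apply]
    exact if_neg (not_lt_of_gt h)
  have hXBT := hZBT.mul hBT
  refine ⟨Z * U, fun i j h => hXBT h, ?_⟩
  have hZsum : Zᵀ + Z = C' := by
    ext i j
    simp only [Matrix.add_apply, Matrix.transpose_apply, hZ, Matrix.of_apply]
    rcases lt_trichotomy i j with h | h | h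
    · rw [if_neg (not_lt_of_gt h), if_pos h, zero_add]
    · subst h
      rw [if_neg (lt_irrefl i), add_zero, hC'diag]
    · rw [if_pos h, if_neg (not_lt_of_gt h), add_zero]
      exact hC'symm i j
  have key : (Z * U)ᵀ * U + Uᵀ * (Z * U) = Uᵀ * (Zᵀ + Z) * U := by
    rw [Matrix.transpose_mul]
    noncomm_ring
  rw [key, hZsum, hC', ← Matrix.mul_assoc, ← Matrix.mul_assoc, ← Matrix.transpose_mul,
    hVU, Matrix.transpose_one, Matrix.one_mul, Matrix.mul_assoc, hVU, Matrix.mul_one]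
end

section
/- Let P_i be the interleaving permutation matrix of order 2r and let L₁ be unit lower triangular, U₁ unit upper triangular, and G₁ lower triangular, all r×r. Then P_i^T · [[L₁, 0],[G₁, U₁^T]] · P_i is unit lower triangular. -/
open Matrix

/-- Conjugating `[[L₁,0],[G₁,U₁ᵀ]]` by the interleaving permutation yields a unit
lower triangular matrix (w.r.t. the interleaved, i.e. lexicographic, order),
provided `G₁` is lower triangular. -/
theorem interleaving_unit_lower_triangular (F : Type*) [Field F] (r : ℕ)
    (L₁ G₁ U₁ : Matrix (Fin r) (Fin r) F)
    (hLdiag : ∀ i, L₁ i i = 1) (hLup : ∀ i j : Fin r, i < j → L₁ i j = 0)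
    (hUdiag : ∀ i, U₁ i i = 1) (hUlow : ∀ i j : Fin r, j < i → U₁ i j = 0)
    (hG : ∀ i j : Fin r, i < j → G₁ i j = 0)
    (P : Matrix (Fin r ⊕ Fin r) (Fin r × Fin 2) F)
    (hP : ∀ j k, P j k =
      if j = (if k.2 = 0 then Sum.inl k.1 else Sum.inr k.1) then 1 else 0) :
    (∀ p : Fin r × Fin 2,
      (Pᵀ * Matrix.fromBlocks L₁ 0 G₁ U₁ᵀ * P) p p = 1) ∧
    (∀ p q : Fin r × Fin 2, (p.1 < q.1 ∨ (p.1 = q.1 ∧ p.2 < q.2)) →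
      (Pᵀ * Matrix.fromBlocks L₁ 0 G₁ U₁ᵀ * P) p q = 0) := by
  set M := Matrix.fromBlocks L₁ 0 G₁ U₁ᵀ with hM
  set f : Fin r × Fin 2 → Fin r ⊕ Fin r :=
    fun p => if p.2 = 0 then Sum.inl p.1 else Sum.inr p.1 with hf
  have key : ∀ p q, (Pᵀ * M * P) p q = M (f p) (f q) := by
    intro p q
    simp only [mul_apply, transpose_apply, hP]
    simp [Finset.sum_ite_eq, Finset.mul_sum, mul_ite, ite_mul, hf]
  have hval : ∀ (i j : Fin r) (s t : Fin 2),
      M (f (i, s)) (f (j, t)) =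
        if s = 0 then (if t = 0 then L₁ i j else 0)
        else (if t = 0 then G₁ i j else U₁ j i) := by
    intro i j s t
    fin_cases s <;> fin_cases t <;> simp [hf, hM, Matrix.fromBlocks]
  constructor
  · rintro ⟨i, s⟩
    rw [key, hval]
    fin_cases s <;> simp [hLdiag, hUdiag]
  · rintro ⟨i, s⟩ ⟨j, t⟩ h
    rw [key, hval]
    fin_cases s <;> fin_cases t <;> simp_all
end

section
/- Every symmetric matrix A over a field of characteristic different from 2 admits a factorization A = P L D L^T P^T, where P is a permutation matrix, L is unit lower triangular, and D is block diagonal with blocks either 1×1 scalars or 2×2 antidiagonal blocks of the form [[0,x],[x,0]]. -/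
open Matrix

namespace PLDLT
variable {F : Type*} [Field F]
variable {F : Type*} [Field F]

def Good (n : ℕ) (A : Matrix (Fin n) (Fin n) F) : Prop :=
  ∃ (σ : Equiv.Perm (Fin n)) (L D : Matrix (Fin n) (Fin n) F),
    (∀ i, L i i = 1) ∧ (∀ i j : Fin n, i < j → L i j = 0) ∧ D.IsSymm ∧
    (∀ i j : Fin n, D i j ≠ 0 → i.val = j.val ∨ i.val + 1 = j.val ∨ j.val + 1 = i.val) ∧
    (∀ i j : Fin n, i.val + 1 = j.val → D i j ≠ 0 →
      D i i = 0 ∧ D j j = 0 ∧ (∀ k : Fin n, j.val + 1 = k.val → D j k = 0) ∧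
      (∀ k : Fin n, k.val + 1 = i.val → D k i = 0)) ∧
    A = (L * D * Lᵀ).submatrix σ σ

def extPerm {m : ℕ} (σ : Equiv.Perm (Fin m)) : Equiv.Perm (Fin (m+1)) :=
  (finSuccEquiv m).trans ((Equiv.optionCongr σ).trans (finSuccEquiv m).symm)

@[simp] lemma extPerm_zero {m : ℕ} (σ : Equiv.Perm (Fin m)) : extPerm σ 0 = 0 := by
  simp [extPerm]

@[simp] lemma extPerm_succ {m : ℕ} (σ : Equiv.Perm (Fin m)) (i : Fin m) :
    extPerm σ i.succ = (σ i).succ := by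
  simp [extPerm]

lemma good_step1 {m : ℕ} (A : Matrix (Fin (m+1)) (Fin (m+1)) F) (hA : A.IsSymm)
    (ha : A 0 0 ≠ 0)
    (IH : ∀ (S : Matrix (Fin m) (Fin m) F), S.IsSymm → Good m S) : Good (m+1) A := by
  have hAe : ∀ i j, A j i = A i j := fun i j => hA.apply i j
  set a := A 0 0 with ha_def
  set S : Matrix (Fin m) (Fin m) F :=
    Matrix.of (fun i j => A i.succ j.succ - A i.succ 0 * A 0 j.succ / a) with hS_def
  have hSsymm : S.IsSymm := by
    ext i j
    simp only [transpose_apply, hS_def, Matrix.of_apply]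
    rw [hAe j.succ i.succ, hAe j.succ 0, hAe 0 i.succ]
    ring
  obtain ⟨σ', L', D', h1, h2, h3, h4, h5, h6⟩ := IH S hSsymm
  have hD'e : ∀ i j, D' j i = D' i j := fun i j => h3.apply i j
  set u : Fin m → F := fun i => A (σ'.symm i).succ 0 / a with hu_def
  set L : Matrix (Fin (m+1)) (Fin (m+1)) F :=
    Matrix.of (Fin.cons (Fin.cons 1 (fun _ => 0)) (fun i => Fin.cons (u i) (fun j => L' i j)))
    with hL_def
  set D : Matrix (Fin (m+1)) (Fin (m+1)) F :=
    Matrix.of (Fin.cons (Fin.cons a (fun _ => 0)) (fun i => Fin.cons 0 (fun j => D' i j)))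
    with hD_def
  have L00 : L 0 0 = 1 := rfl
  have L0s : ∀ j : Fin m, L 0 j.succ = 0 := fun j => by simp [hL_def]
  have Ls0 : ∀ i : Fin m, L i.succ 0 = u i := fun i => by simp [hL_def]
  have Lss : ∀ i j : Fin m, L i.succ j.succ = L' i j := fun i j => by simp [hL_def]
  have D00 : D 0 0 = a := rfl
  have D0s : ∀ j : Fin m, D 0 j.succ = 0 := fun j => by simp [hD_def]
  have Ds0 : ∀ i : Fin m, D i.succ 0 = 0 := fun i => by simp [hD_def]
  have Dss : ∀ i j : Fin m, D i.succ j.succ = D' i j := fun i j => by simp [hD_def]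
  -- entry formula for L * D * Lᵀ
  have hM : ∀ p q, (L * D * Lᵀ) p q
      = (L p 0 * a) * L q 0 + ∑ t, (∑ w, L p w.succ * D' w t) * L q t.succ := by
    intro p q
    rw [Matrix.mul_apply, Fin.sum_univ_succ]
    congr 1
    · rw [Matrix.mul_apply, Fin.sum_univ_succ, transpose_apply]
      simp only [D00, D0s, Ds0]
      simp
    · apply Finset.sum_congr rfl
      intro t _
      rw [Matrix.mul_apply, Fin.sum_univ_succ, transpose_apply]
      simp only [D0s, Dss]
      simp
  refine ⟨extPerm σ', L, D, ?_, ?_, ?_, ?_, ?_, ?_⟩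
  · intro i
    induction i using Fin.cases with
    | zero => exact L00
    | succ i => rw [Lss]; exact h1 i
  · intro i j hij
    induction i using Fin.cases with
    | zero =>
      induction j using Fin.cases with
      | zero => exact absurd hij (lt_irrefl _)
      | succ j => exact L0s j
    | succ i =>
      induction j using Fin.cases with
      | zero => exact absurd hij (Fin.not_lt_zero _)
      | succ j => rw [Lss]; exact h2 i j (Fin.succ_lt_succ_iff.mp hij)
  · ext i j
    rw [transpose_apply]
    induction i using Fin.cases with
    | zero =>
      induction j using Fin.cases with
      | zero => rfl
      | succ j => rw [D0s, Ds0]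
    | succ i =>
      induction j using Fin.cases with
      | zero => rw [D0s, Ds0]
      | succ j => rw [Dss, Dss]; exact hD'e i j
  · intro i j hne
    induction i using Fin.cases with
    | zero =>
      induction j using Fin.cases with
      | zero => left; rfl
      | succ j => exact absurd (D0s j) hne
    | succ i =>
      induction j using Fin.cases with
      | zero => exact absurd (Ds0 i) hne
      | succ j =>
        rw [Dss] at hne
        rcases h4 i j hne with h | h | h
        · left; simp only [Fin.val_succ]; omega
        · right; left; simp only [Fin.val_succ]; omega
        · right; right; simp only [Fin.val_succ]; omega
  · intro i j hij hne
    induction i using Fin.cases with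
    | zero =>
      induction j using Fin.cases with
      | zero => simp at hij
      | succ j => exact absurd (D0s j) hne
    | succ i =>
      induction j using Fin.cases with
      | zero => exact absurd (Ds0 i) hne
      | succ j =>
        rw [Dss] at hne
        have hij' : i.val + 1 = j.val := by simpa [Fin.val_succ] using hij
        obtain ⟨c1, c2, c3, c4⟩ := h5 i j hij' hne
        refine ⟨by rw [Dss]; exact c1, by rw [Dss]; exact c2, ?_, ?_⟩
        · intro k hk
          induction k using Fin.cases with
          | zero => simp [Fin.val_succ] at hk
          | succ k => rw [Dss]; exact c3 k (by simpa [Fin.val_succ] using hk)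
        · intro k hk
          induction k using Fin.cases with
          | zero => exact Ds0 i
          | succ k => rw [Dss]; exact c4 k (by simpa [Fin.val_succ] using hk)
  · have hSe : ∀ i j, S i j = (L' * D' * L'ᵀ) (σ' i) (σ' j) := fun i j =>
      congrFun (congrFun h6 i) j
    ext i j
    rw [Matrix.submatrix_apply]
    induction i using Fin.cases with
    | zero =>
      induction j using Fin.cases with
      | zero =>
        rw [extPerm_zero, hM, L00]
        simp [L0s]
        rfl
      | succ j =>
        rw [extPerm_zero, extPerm_succ, hM, L00, Ls0]
        simp only [L0s, zero_mul, Finset.sum_const_zero, add_zero, one_mul]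
        simp only [hu_def, Equiv.symm_apply_apply]
        rw [hAe 0 j.succ]
        field_simp
    | succ i =>
      induction j using Fin.cases with
      | zero =>
        rw [extPerm_zero, extPerm_succ, hM, L00, Ls0]
        simp only [L0s, mul_zero, zero_mul, Finset.sum_const_zero, add_zero, mul_one]
        simp only [hu_def, Equiv.symm_apply_apply]
        field_simp
      | succ j =>
        rw [extPerm_succ, extPerm_succ, hM, Ls0, Ls0]
        have : ∀ t, (∑ w, L (σ' i).succ w.succ * D' w t) * L (σ' j).succ t.succ
            = (L' * D') (σ' i) t * L'ᵀ t (σ' j) := by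
          intro t
          rw [Matrix.mul_apply, transpose_apply, Lss]
          simp only [Lss]
        rw [Finset.sum_congr rfl (fun t _ => this t), ← Matrix.mul_apply, ← hSe]
        simp only [hu_def, Equiv.symm_apply_apply, hS_def, Matrix.of_apply]
        rw [hAe 0 j.succ]
        field_simp
        ring

lemma good_step2 {m : ℕ} (A : Matrix (Fin (m+2)) (Fin (m+2)) F) (hA : A.IsSymm)
    (hdiag : ∀ k, A k k = 0) (hx : A 0 1 ≠ 0)
    (IH : ∀ (S : Matrix (Fin m) (Fin m) F), S.IsSymm → Good m S) : Good (m+2) A := by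
  have hAe : ∀ i j, A j i = A i j := fun i j => hA.apply i j
  set x : F := A 0 1 with hx_def
  set S : Matrix (Fin m) (Fin m) F :=
    Matrix.of (fun i j => A i.succ.succ j.succ.succ -
      (A i.succ.succ 0 * A 1 j.succ.succ + A i.succ.succ 1 * A 0 j.succ.succ) / x) with hS_def
  have hSsymm : S.IsSymm := by
    ext i j
    simp only [transpose_apply, hS_def, Matrix.of_apply]
    rw [hAe j.succ.succ i.succ.succ, hAe j.succ.succ 0, hAe j.succ.succ 1,
      hAe 0 i.succ.succ, hAe 1 i.succ.succ]
    ring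
  obtain ⟨σ', L', D', h1, h2, h3, h4, h5, h6⟩ := IH S hSsymm
  set u0 : Fin m → F := fun i => A (σ'.symm i).succ.succ 0 / x with hu0_def
  set u1 : Fin m → F := fun i => A (σ'.symm i).succ.succ 1 / x with hu1_def
  set L : Matrix (Fin (m+2)) (Fin (m+2)) F :=
    Matrix.of (Fin.cons (Fin.cons 1 (fun _ => 0))
      (Fin.cons (Fin.cons 0 (Fin.cons 1 (fun _ => 0)))
        (fun i => Fin.cons (u1 i) (Fin.cons (u0 i) (fun j => L' i j))))) with hL_def
  set D : Matrix (Fin (m+2)) (Fin (m+2)) F :=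
    Matrix.of (Fin.cons (Fin.cons 0 (Fin.cons x (fun _ => 0)))
      (Fin.cons (Fin.cons x (Fin.cons 0 (fun _ => 0)))
        (fun i => Fin.cons 0 (Fin.cons 0 (fun j => D' i j))))) with hD_def
  have L00 : L 0 0 = 1 := rfl
  have L0s : ∀ k : Fin (m+1), L 0 k.succ = 0 := fun k => by simp [hL_def]
  have L01 : L 0 1 = 0 := by rw [← Fin.succ_zero_eq_one]; exact L0s 0
  have L10 : L 1 0 = 0 := by rw [← Fin.succ_zero_eq_one]; simp [hL_def]
  have L11 : L 1 1 = 1 := by rw [← Fin.succ_zero_eq_one]; simp [hL_def]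
  have L1s : ∀ j : Fin m, L 1 j.succ.succ = 0 := fun j => by
    rw [← Fin.succ_zero_eq_one]; simp [hL_def]
  have Ls0 : ∀ i : Fin m, L i.succ.succ 0 = u1 i := fun i => by simp [hL_def]
  have Ls1 : ∀ i : Fin m, L i.succ.succ 1 = u0 i := fun i => by
    rw [← Fin.succ_zero_eq_one]; simp [hL_def]
  have Lss : ∀ i j : Fin m, L i.succ.succ j.succ.succ = L' i j := fun i j => by simp [hL_def]
  have D00 : D 0 0 = 0 := rfl
  have D01 : D 0 1 = x := by rw [← Fin.succ_zero_eq_one]; simp [hD_def]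
  have D0s : ∀ j : Fin m, D 0 j.succ.succ = 0 := fun j => by simp [hD_def]
  have D10 : D 1 0 = x := by rw [← Fin.succ_zero_eq_one]; simp [hD_def]
  have D11 : D 1 1 = 0 := by rw [← Fin.succ_zero_eq_one]; simp [hD_def]
  have D1s : ∀ j : Fin m, D 1 j.succ.succ = 0 := fun j => by
    rw [← Fin.succ_zero_eq_one]; simp [hD_def]
  have Ds0 : ∀ i : Fin m, D i.succ.succ 0 = 0 := fun i => by simp [hD_def]
  have Ds1 : ∀ i : Fin m, D i.succ.succ 1 = 0 := fun i => by
    rw [← Fin.succ_zero_eq_one]; simp [hD_def]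
  have Dss : ∀ i j : Fin m, D i.succ.succ j.succ.succ = D' i j := fun i j => by simp [hD_def]
  have hM : ∀ p q, (L * D * Lᵀ) p q
      = (L p 1 * x) * L q 0 + (L p 0 * x) * L q 1
        + ∑ t, (∑ w, L p w.succ.succ * D' w t) * L q t.succ.succ := by
    intro p q
    rw [Matrix.mul_apply, Fin.sum_univ_succ, Fin.sum_univ_succ, ← add_assoc]
    simp only [Fin.succ_zero_eq_one]
    congr 1
    congr 1
    · rw [Matrix.mul_apply, Fin.sum_univ_succ, Fin.sum_univ_succ, transpose_apply]
      simp only [Fin.succ_zero_eq_one, D00, D10, Ds0]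
      simp
    · rw [Matrix.mul_apply, Fin.sum_univ_succ, Fin.sum_univ_succ, transpose_apply]
      simp only [Fin.succ_zero_eq_one, D01, D11, Ds1]
      simp
    · apply Finset.sum_congr rfl
      intro t _
      rw [Matrix.mul_apply, Fin.sum_univ_succ, Fin.sum_univ_succ, transpose_apply]
      simp only [Fin.succ_zero_eq_one, D0s, D1s, Dss]
      simp
  refine ⟨extPerm (extPerm σ'), L, D, ?_, ?_, ?_, ?_, ?_, ?_⟩
  · intro i
    induction i using Fin.cases with
    | zero => exact L00
    | succ k =>
      induction k using Fin.cases with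
      | zero => simp only [Fin.succ_zero_eq_one]; exact L11
      | succ i => rw [Lss]; exact h1 i
  · intro i j hij
    induction i using Fin.cases with
    | zero =>
      induction j using Fin.cases with
      | zero => exact absurd hij (lt_irrefl _)
      | succ k => exact L0s k
    | succ k =>
      induction j using Fin.cases with
      | zero => exact absurd hij (Fin.not_lt_zero _)
      | succ k' =>
        have hkk : k < k' := Fin.succ_lt_succ_iff.mp hij
        induction k using Fin.cases with
        | zero =>
          induction k' using Fin.cases with
          | zero => exact absurd hkk (lt_irrefl _)
          | succ j => simp only [Fin.succ_zero_eq_one]; exact L1s j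
        | succ i =>
          induction k' using Fin.cases with
          | zero => exact absurd hkk (Fin.not_lt_zero _)
          | succ j => rw [Lss]; exact h2 i j (Fin.succ_lt_succ_iff.mp hkk)
  · ext i j
    rw [transpose_apply]
    induction i using Fin.cases with
    | zero =>
      induction j using Fin.cases with
      | zero => rfl
      | succ k =>
        induction k using Fin.cases with
        | zero => simp only [Fin.succ_zero_eq_one]; rw [D01, D10]
        | succ j => rw [D0s, Ds0]
    | succ k =>
      induction j using Fin.cases with
      | zero =>
        induction k using Fin.cases with
        | zero => simp only [Fin.succ_zero_eq_one]; rw [D01, D10]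
        | succ i => rw [D0s, Ds0]
      | succ k' =>
        induction k using Fin.cases with
        | zero =>
          induction k' using Fin.cases with
          | zero => rfl
          | succ j => simp only [Fin.succ_zero_eq_one]; rw [D1s, Ds1]
        | succ i =>
          induction k' using Fin.cases with
          | zero => simp only [Fin.succ_zero_eq_one]; rw [D1s, Ds1]
          | succ j => rw [Dss, Dss]; exact h3.apply i j
  · intro i j hne
    induction i using Fin.cases with
    | zero =>
      induction j using Fin.cases with
      | zero => left; rfl
      | succ k =>
        induction k using Fin.cases with
        | zero => right; left; rfl
        | succ j => exact absurd (D0s j) hne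
    | succ k =>
      induction j using Fin.cases with
      | zero =>
        induction k using Fin.cases with
        | zero => right; right; rfl
        | succ i => exact absurd (Ds0 i) hne
      | succ k' =>
        induction k using Fin.cases with
        | zero =>
          induction k' using Fin.cases with
          | zero => left; rfl
          | succ j =>
            simp only [Fin.succ_zero_eq_one] at hne
            exact absurd (D1s j) hne
        | succ i =>
          induction k' using Fin.cases with
          | zero =>
            simp only [Fin.succ_zero_eq_one] at hne
            exact absurd (Ds1 i) hne
          | succ j =>
            rw [Dss] at hne
            rcases h4 i j hne with h | h | h
            · left; simp only [Fin.val_succ]; omega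
            · right; left; simp only [Fin.val_succ]; omega
            · right; right; simp only [Fin.val_succ]; omega
  · intro i j hij hne
    induction i using Fin.cases with
    | zero =>
      induction j using Fin.cases with
      | zero => simp at hij
      | succ k =>
        induction k using Fin.cases with
        | zero =>
          simp only [Fin.succ_zero_eq_one]
          refine ⟨D00, D11, ?_, ?_⟩
          · intro k hk
            induction k using Fin.cases with
            | zero => simp at hk
            | succ k' =>
              induction k' using Fin.cases with
              | zero => simp [Fin.val_succ] at hk
              | succ j => exact D1s j
          · intro k hk
            simp [Fin.val_succ] at hk
        | succ j =>
          exfalso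
          simp only [Fin.val_succ, Fin.val_zero] at hij
          omega
    | succ k =>
      induction j using Fin.cases with
      | zero => simp [Fin.val_succ] at hij
      | succ k' =>
        induction k using Fin.cases with
        | zero =>
          induction k' using Fin.cases with
          | zero => simp [Fin.val_succ] at hij
          | succ j =>
            simp only [Fin.succ_zero_eq_one] at hne
            exact absurd (D1s j) hne
        | succ i =>
          induction k' using Fin.cases with
          | zero =>
            exfalso
            simp only [Fin.val_succ, Fin.val_zero] at hij
            omega
          | succ j =>
            rw [Dss] at hne
            have hij' : i.val + 1 = j.val := by
              simp only [Fin.val_succ] at hij; omega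
            obtain ⟨c1, c2, c3, c4⟩ := h5 i j hij' hne
            refine ⟨by rw [Dss]; exact c1, by rw [Dss]; exact c2, ?_, ?_⟩
            · intro k hk
              induction k using Fin.cases with
              | zero => simp [Fin.val_succ] at hk
              | succ k' =>
                induction k' using Fin.cases with
                | zero => simp [Fin.val_succ] at hk
                | succ w =>
                  rw [Dss]
                  exact c3 w (by simp only [Fin.val_succ] at hk ⊢; omega)
            · intro k hk
              induction k using Fin.cases with
              | zero => simp [Fin.val_succ] at hk
              | succ k' =>
                induction k' using Fin.cases with
                | zero => simp only [Fin.succ_zero_eq_one]; exact D1s i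
                | succ w =>
                  rw [Dss]
                  exact c4 w (by simp only [Fin.val_succ] at hk ⊢; omega)
  · have hSe : ∀ i j, S i j = (L' * D' * L'ᵀ) (σ' i) (σ' j) := fun i j =>
      congrFun (congrFun h6 i) j
    have hzs : ∀ q : Fin (m+2), ∑ t, (∑ w, L 0 w.succ.succ * D' w t) * L q t.succ.succ = 0 := by
      intro q
      apply Finset.sum_eq_zero
      intro t _
      rw [Finset.sum_eq_zero (fun w _ => by rw [L0s]; ring), zero_mul]
    have hos : ∀ q : Fin (m+2), ∑ t, (∑ w, L 1 w.succ.succ * D' w t) * L q t.succ.succ = 0 := by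
      intro q
      apply Finset.sum_eq_zero
      intro t _
      rw [Finset.sum_eq_zero (fun w _ => by rw [L1s]; ring), zero_mul]
    ext i j
    rw [Matrix.submatrix_apply]
    induction i using Fin.cases with
    | zero =>
      simp only [extPerm_zero]
      induction j using Fin.cases with
      | zero =>
        rw [extPerm_zero, hM, hzs, L00, L01]
        rw [hdiag 0]
        ring
      | succ k =>
        simp only [extPerm_succ]
        induction k using Fin.cases with
        | zero =>
          simp only [extPerm_zero, Fin.succ_zero_eq_one]
          rw [hM, hzs, L00, L01, L10, L11]
          ring
        | succ j =>
          simp only [extPerm_succ]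
          rw [hM, hzs, L00, L01, Ls0, Ls1]
          simp only [hu0_def, hu1_def, Equiv.symm_apply_apply]
          rw [hAe 0 j.succ.succ]
          field_simp
          ring
    | succ k =>
      simp only [extPerm_succ]
      induction k using Fin.cases with
      | zero =>
        simp only [extPerm_zero, Fin.succ_zero_eq_one]
        induction j using Fin.cases with
        | zero =>
          rw [extPerm_zero, hM, hos, L00, L01, L10, L11]
          rw [hAe 0 1]
          ring
        | succ k' =>
          simp only [extPerm_succ]
          induction k' using Fin.cases with
          | zero =>
            simp only [extPerm_zero, Fin.succ_zero_eq_one]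
            rw [hM, hos, L10, L11]
            rw [hdiag 1]
            ring
          | succ j =>
            simp only [extPerm_succ]
            rw [hM, hos, L10, L11, Ls0, Ls1]
            simp only [hu0_def, hu1_def, Equiv.symm_apply_apply]
            rw [hAe 1 j.succ.succ]
            field_simp
            ring
      | succ i =>
        simp only [extPerm_succ]
        induction j using Fin.cases with
        | zero =>
          rw [extPerm_zero, hM, L00, L01, Ls0, Ls1]
          have hz : ∀ t, (∑ w, L (σ' i).succ.succ w.succ.succ * D' w t) * L 0 t.succ.succ = 0 := by
            intro t
            rw [L0s, mul_zero]
          rw [Finset.sum_congr rfl (fun t _ => hz t)]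
          simp only [hu0_def, hu1_def, Equiv.symm_apply_apply]
          field_simp
          simp
        | succ k' =>
          simp only [extPerm_succ]
          induction k' using Fin.cases with
          | zero =>
            simp only [extPerm_zero, Fin.succ_zero_eq_one]
            rw [hM, L10, L11, Ls0, Ls1]
            have hz : ∀ t, (∑ w, L (σ' i).succ.succ w.succ.succ * D' w t) * L 1 t.succ.succ = 0 := by
              intro t
              rw [L1s, mul_zero]
            rw [Finset.sum_congr rfl (fun t _ => hz t)]
            simp only [hu0_def, hu1_def, Equiv.symm_apply_apply]
            field_simp
            simp
          | succ j =>
            simp only [extPerm_succ]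
            rw [hM, Ls0, Ls0, Ls1, Ls1]
            have hz : ∀ t, (∑ w, L (σ' i).succ.succ w.succ.succ * D' w t) * L (σ' j).succ.succ t.succ.succ
                = (L' * D') (σ' i) t * L'ᵀ t (σ' j) := by
              intro t
              rw [Matrix.mul_apply, transpose_apply, Lss]
              simp only [Lss]
            rw [Finset.sum_congr rfl (fun t _ => hz t), ← Matrix.mul_apply, ← hSe]
            simp only [hu0_def, hu1_def, Equiv.symm_apply_apply, hS_def, Matrix.of_apply]
            rw [hAe 0 j.succ.succ, hAe 1 j.succ.succ]
            field_simp
            ring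

lemma good_of_submatrix {n : ℕ} (A : Matrix (Fin n) (Fin n) F) (τ : Equiv.Perm (Fin n))
    (h : Good n (A.submatrix τ τ)) : Good n A := by
  obtain ⟨σ, L, D, h1, h2, h3, h4, h5, h6⟩ := h
  refine ⟨(τ⁻¹ : Equiv.Perm (Fin n)).trans σ, L, D, h1, h2, h3, h4, h5, ?_⟩
  ext i j
  have := congrFun (congrFun h6 (τ⁻¹ i)) (τ⁻¹ j)
  simpa using this

lemma good_zero {n : ℕ} : Good (F := F) n 0 := by
  refine ⟨1, 1, 0, fun i => Matrix.one_apply_eq i, fun i j hij => Matrix.one_apply_ne (ne_of_lt hij), Matrix.isSymm_zero, ?_, ?_, ?_⟩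
  · intro i j h; simp at h
  · intro i j _ h; simp at h
  · ext i j; simp

lemma good_all : ∀ n (A : Matrix (Fin n) (Fin n) F), A.IsSymm → Good n A := by
  intro n
  induction n using Nat.strong_induction_on with
  | _ n IHn =>
  intro A hA
  by_cases hd : ∃ k, A k k ≠ 0
  · obtain ⟨k, hk⟩ := hd
    cases n with
    | zero => exact k.elim0
    | succ m =>
      apply good_of_submatrix A (Equiv.swap 0 k)
      apply good_step1
      · exact hA.submatrix _
      · simpa [Equiv.swap_apply_left] using hk
      · intro S hS
        exact IHn m (by omega) S hS
  · push_neg at hd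
    by_cases hz : A = 0
    · rw [hz]; exact good_zero
    · have hex : ∃ p q, A p q ≠ 0 := by
        by_contra h
        push_neg at h
        exact hz (by ext i j; simpa using h i j)
      obtain ⟨p, q, hpq⟩ := hex
      have hne : p ≠ q := fun h => hpq (by rw [h]; exact hd q)
      cases n with
      | zero => exact p.elim0
      | succ n' =>
        cases n' with
        | zero => exact absurd (Fin.fin_one_eq_zero p ▸ Fin.fin_one_eq_zero q ▸ rfl) hne
        | succ m =>
          set τ1 := Equiv.swap (0 : Fin (m+2)) p with hτ1
          have hq' : τ1.symm q ≠ 0 := by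
            intro h
            apply hne
            have := congrArg τ1 h
            rw [Equiv.apply_symm_apply] at this
            simp [hτ1, Equiv.swap_apply_left] at this
            exact this.symm
          set τ2 := Equiv.swap (1 : Fin (m+2)) (τ1.symm q) with hτ2
          apply good_of_submatrix A τ1
          apply good_of_submatrix _ τ2
          apply good_step2
          · exact (hA.submatrix _).submatrix _
          · intro k; exact hd _
          · have h20 : τ2 0 = 0 :=
              Equiv.swap_apply_of_ne_of_ne (by simp) (Ne.symm hq')
            have h21 : τ2 1 = τ1.symm q := Equiv.swap_apply_left _ _
            simp only [Matrix.submatrix_apply, h20, h21]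
            rw [show τ1 0 = p from Equiv.swap_apply_left _ _, Equiv.apply_symm_apply]
            exact hpq
          · intro S hS
            exact IHn m (by omega) S hS


lemma conj_perm {n : ℕ} (σ : Equiv.Perm (Fin n)) (M : Matrix (Fin n) (Fin n) F) :
    (σ.toPEquiv.toMatrix : Matrix (Fin n) (Fin n) F) * M *
      (σ.toPEquiv.toMatrix : Matrix (Fin n) (Fin n) F)ᵀ = M.submatrix σ σ := by
  rw [PEquiv.toMatrix_toPEquiv_mul, ← PEquiv.toMatrix_symm, ← Equiv.toPEquiv_symm,
    PEquiv.mul_toMatrix_toPEquiv]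
  simp [Matrix.submatrix_submatrix, Function.comp]

end PLDLT

/-- Every symmetric matrix over a field of characteristic ≠ 2 admits a
`P L D Lᵀ Pᵀ` factorization with `P` a permutation matrix, `L` unit lower
triangular and `D` block diagonal with 1×1 blocks or 2×2 antidiagonal blocks. -/
theorem exists_pldltpt (F : Type*) [Field F] (hchar : ringChar F ≠ 2) (n : ℕ)
    (A : Matrix (Fin n) (Fin n) F) (hA : A.IsSymm) :
    ∃ (σ : Equiv.Perm (Fin n)) (L D : Matrix (Fin n) (Fin n) F),
      (∀ i, L i i = 1) ∧ (∀ i j : Fin n, i < j → L i j = 0) ∧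
      D.IsSymm ∧
      -- D is tridiagonal:
      (∀ i j : Fin n, D i j ≠ 0 →
        i.val = j.val ∨ i.val + 1 = j.val ∨ j.val + 1 = i.val) ∧
      -- every nonzero superdiagonal entry belongs to an antidiagonal 2×2 block:
      (∀ i j : Fin n, i.val + 1 = j.val → D i j ≠ 0 →
        D i i = 0 ∧ D j j = 0 ∧
        (∀ k : Fin n, j.val + 1 = k.val → D j k = 0) ∧
        (∀ k : Fin n, k.val + 1 = i.val → D k i = 0)) ∧
      A = (σ.toPEquiv.toMatrix : Matrix (Fin n) (Fin n) F) * L * D * Lᵀ *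
        (σ.toPEquiv.toMatrix : Matrix (Fin n) (Fin n) F)ᵀ := by
  obtain ⟨σ, L, D, h1, h2, h3, h4, h5, h6⟩ := PLDLT.good_all n A hA
  refine ⟨σ, L, D, h1, h2, h3, h4, h5, ?_⟩
  rw [h6, ← PLDLT.conj_perm σ (L * D * Lᵀ)]
  simp only [mul_assoc]
end
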